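/- A pair (w,c), with w a word of positive integers and c a nondecreasing integer sequence of the same length, is a k-ribbon word if and only if there exists a k-tuple of semi-standard Young tableaux of skew shapes such that w is the content reading word of the k-tuple and c is the corresponding sequence of shifted contents, read in the same order. -/

import Mathlib

open scoped Classical

noncomputable section

/-! ### Signed, colored graphs -/

/-- A signed, colored graph of type `(n, N)`: a vertex set `V`, a signature
function `σ : V → {±1}^(N-1)` (encoded as a function `ℕ → ℤ` whose values are `±1`
for `1 ≤ i ≤ N-1`), and for each `1 < i < n` a set of edges `E_i` (encoded as a
symmetric irreflexive relation). -/
structure SCG (V : Type) (n N : ℕ) where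
  sgn : V → ℕ → ℤ
  edge : ℕ → V → V → Prop
  sgn_pm : ∀ v i, 1 ≤ i → i < N → sgn v i = 1 ∨ sgn v i = -1
  edge_symm : ∀ i v w, edge i v w → edge i w v
  edge_ne : ∀ i v w, edge i v w → v ≠ w
  edge_supp : ∀ i v w, edge i v w → 1 < i ∧ i < n

namespace SCG

variable {V W : Type} {n N n' N' : ℕ}

/-- Reachability using edges whose colors lie in `S`. -/
def ReachS (G : SCG V n N) (S : Set ℕ) (v w : V) : Prop :=
  Relation.ReflTransGen (fun a b => ∃ i ∈ S, G.edge i a b) v w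

/-- Reachability using all edges. -/
def Reach (G : SCG V n N) (v w : V) : Prop :=
  Relation.ReflTransGen (fun a b => ∃ i, G.edge i a b) v w

/-- The connected component of `v0`, as a signed colored graph. -/
def component (G : SCG V n N) (v0 : V) : SCG {v : V // G.Reach v0 v} n N where
  sgn v := G.sgn v.1
  edge i v w := G.edge i v.1 w.1
  sgn_pm v := G.sgn_pm v.1
  edge_symm i v w h := G.edge_symm i v.1 w.1 h
  edge_ne i v w h hvw := G.edge_ne i v.1 w.1 h (congrArg Subtype.val hvw)
  edge_supp i v w h := G.edge_supp i v.1 w.1 h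

/-- The `(m, M)`-restriction of a signed colored graph: keep the vertex set,
truncate the signature (i.e. only promise values on `1 ≤ i ≤ M-1`), and
keep only the edges `E_2, …, E_(m-1)`. -/
def restrict (G : SCG V n N) (m M : ℕ) (hm : m ≤ n) (hM : M ≤ N) : SCG V m M where
  sgn := G.sgn
  edge i v w := i < m ∧ G.edge i v w
  sgn_pm v i h1 h2 := G.sgn_pm v i h1 (lt_of_lt_of_le h2 hM)
  edge_symm i v w h := ⟨h.1, G.edge_symm i v w h.2⟩
  edge_ne i v w h := G.edge_ne i v w h.2
  edge_supp i v w h := ⟨(G.edge_supp i v w h.2).1, h.1⟩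

/-- A morphism of signed colored graphs of the same type: preserves all
signature coordinates and all colored edges. -/
def IsMorphism (G : SCG V n N) (H : SCG W n N) (φ : V → W) : Prop :=
  (∀ v i, 1 ≤ i → i < N → H.sgn (φ v) i = G.sgn v i) ∧
  ∀ i v w, G.edge i v w → H.edge i (φ v) (φ w)

/-- Isomorphism of signed colored graphs: a bijective morphism. -/
def Isomorphic (G : SCG V n N) (H : SCG W n N) : Prop :=
  ∃ φ : V → W, IsMorphism G H φ ∧ Function.Bijective φ

/-- An isomorphism of edge-colored graphs between the connected component of `v0`
in `G` using the colors in `S`, and the connected component of `u0` in `H` using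
the colors `r '' S`, matching each color `i ∈ S` with the color `r i`. -/
def ColorIso (G : SCG V n N) (v0 : V) (H : SCG W n' N') (u0 : W)
    (r : ℕ → ℕ) (S : Set ℕ) : Prop :=
  ∃ f : {v : V // G.ReachS S v0 v} → {u : W // H.ReachS (r '' S) u0 u},
    Function.Bijective f ∧ ∀ i ∈ S, ∀ a b, G.edge i a.1 b.1 ↔ H.edge (r i) (f a).1 (f b).1

/-- Dual equivalence axiom 1. -/
def Ax1 (G : SCG V n N) : Prop :=
  ∀ i, 1 < i → i < n → ∀ w, (G.sgn w (i - 1) = -G.sgn w i ↔ ∃! x, G.edge i w x)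

/-- Dual equivalence axiom 2. -/
def Ax2 (G : SCG V n N) : Prop :=
  ∀ i v w, G.edge i v w →
    G.sgn v (i - 1) = -G.sgn w (i - 1) ∧ G.sgn v i = -G.sgn w i ∧
      ∀ h, h + 2 < i ∨ i + 1 < h → G.sgn v h = G.sgn w h

/-- Dual equivalence axiom 3. -/
def Ax3 (G : SCG V n N) : Prop :=
  ∀ i v w, G.edge i v w →
    (G.sgn v (i - 2) = -G.sgn w (i - 2) → G.sgn v (i - 2) = -G.sgn v (i - 1)) ∧
    (G.sgn v (i + 1) = -G.sgn w (i + 1) → G.sgn v (i + 1) = -G.sgn v i)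

/-- Dual equivalence axiom 5. -/
def Ax5 (G : SCG V n N) : Prop :=
  ∀ i j w x y, G.edge i w x → G.edge j x y → i + 3 ≤ j ∨ j + 3 ≤ i →
    ∃ v, G.edge j w v ∧ G.edge i v y

/-- Dual equivalence axiom 6 : any two vertices of a connected component of
`E_2 ∪ ⋯ ∪ E_i` may be joined by a path crossing at most one `E_i` edge. -/
def Ax6 (G : SCG V n N) : Prop :=
  ∀ i, 1 < i → i < n → ∀ v w : V, G.ReachS (Set.Icc 2 i) v w →
    ∃ u u', G.ReachS (Set.Icc 2 (i - 1)) v u ∧ (u = u' ∨ G.edge i u u') ∧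
      G.ReachS (Set.Icc 2 (i - 1)) u' w

end SCG

/-! ### Standard Young tableaux and the standard dual equivalence graph -/

/-- A standard Young tableau of shape `μ`, recorded by the function sending
`k : Fin μ.card` to the cell containing the entry `k+1`.  (Cells are in matrix
coordinates `(row, column)`; entries increase along rows and along columns.) -/
structure SYT (μ : YoungDiagram) where
  cellOf : Fin μ.card → ℕ × ℕ
  mem_cells : ∀ k, cellOf k ∈ μ.cells
  inj : Function.Injective cellOf
  row_mono : ∀ k l, (cellOf k).1 = (cellOf l).1 → (cellOf k).2 < (cellOf l).2 → k < l
  col_mono : ∀ k l, (cellOf k).2 = (cellOf l).2 → (cellOf k).1 < (cellOf l).1 → k < l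

instance (μ : YoungDiagram) : Finite (SYT μ) := by
  apply Finite.of_injective
    (fun T : SYT μ => fun k => (⟨T.cellOf k, T.mem_cells k⟩ : {x : ℕ × ℕ // x ∈ μ.cells}))
  intro T U h
  cases T; cases U
  simp only [SYT.mk.injEq]
  funext k
  exact congrArg Subtype.val (congrFun h k)

/-- The content of a cell: `column - row`. -/
def cellContent (x : ℕ × ℕ) : ℤ := (x.2 : ℤ) - (x.1 : ℤ)

/-- `x` comes before `y` in the content reading order: smaller content first,
and within a diagonal, southwest to northeast. -/
def readBefore (x y : ℕ × ℕ) : Prop :=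
  cellContent x < cellContent y ∨ (cellContent x = cellContent y ∧ x.2 < y.2)

/-- The cell containing the entry `a` (for `1 ≤ a ≤ μ.card`). -/
def SYT.cell {μ : YoungDiagram} (T : SYT μ) (a : ℕ) : ℕ × ℕ :=
  if h : 1 ≤ a ∧ a ≤ μ.card then T.cellOf ⟨a - 1, by omega⟩ else (0, 0)

/-- The descent signature of a standard tableau: `σ(T)_i = +1` iff `i` appears
before `i+1` in the content reading word. -/
def sytSgn {μ : YoungDiagram} (T : SYT μ) : ℕ → ℤ := fun i =>
  if readBefore (T.cell i) (T.cell (i + 1)) then 1 else -1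

/-- The entry `b` lies between the entries `a` and `c` in the content reading
word of `T`. -/
def posBetween {μ : YoungDiagram} (T : SYT μ) (a b c : ℕ) : Prop :=
  (readBefore (T.cell a) (T.cell b) ∧ readBefore (T.cell b) (T.cell c)) ∨
  (readBefore (T.cell c) (T.cell b) ∧ readBefore (T.cell b) (T.cell a))

/-- `U` is obtained from `T` by exchanging the cells of the entries `a`, `b`. -/
def swapEq {μ : YoungDiagram} (T U : SYT μ) (a b : ℕ) : Prop :=
  ∀ x, 1 ≤ x → x ≤ μ.card →
    U.cell x = if x = a then T.cell b else if x = b then T.cell a else T.cell x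

/-- The elementary dual equivalence for `i-1, i, i+1`: the middle letter (in
reading order) of `i-1, i, i+1` is not `i`, and the outer two letters are
exchanged. -/
def stdEdgeCore (μ : YoungDiagram) (i : ℕ) (T U : SYT μ) : Prop :=
  1 < i ∧ i < μ.card ∧
    ((posBetween T i (i + 1) (i - 1) ∧ swapEq T U (i - 1) i) ∨
     (posBetween T i (i - 1) (i + 1) ∧ swapEq T U i (i + 1)))

/-- The standard dual equivalence graph `G_μ` for a partition `μ` of `n`. -/
def stdDEG (n : ℕ) (μ : YoungDiagram) (hcard : μ.card = n) : SCG (SYT μ) n n where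
  sgn T := sytSgn T
  edge i T U := T ≠ U ∧ (stdEdgeCore μ i T U ∨ stdEdgeCore μ i U T)
  sgn_pm := by
    intro v i _ _
    simp only [sytSgn]
    split
    · exact Or.inl rfl
    · exact Or.inr rfl
  edge_symm := by
    rintro i T U ⟨h1, h2⟩
    exact ⟨h1.symm, h2.symm⟩
  edge_ne := fun i T U h => h.1
  edge_supp := by
    rintro i T U ⟨h1, h2 | h2⟩ <;> exact ⟨h2.1, hcard ▸ h2.2.1⟩

namespace SCG

variable {V W : Type} {n N : ℕ}

/-- Dual equivalence axiom 4 : every connected component of `E_(i-1) ∪ E_i` is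
isomorphic, as an edge-colored graph, to a connected component of the
restriction to colors `{2,3}` (relabelled `i-1, i`) of a standard dual
equivalence graph `G_μ` with `μ ⊢ 4`; and similarly for three colors and
partitions of `5`. -/
def Ax4 (G : SCG V n N) : Prop :=
  (∀ i, 2 < i → i < n → ∀ v0 : V, ∃ (μ : YoungDiagram) (h4 : μ.card = 4) (T0 : SYT μ),
      G.ColorIso v0 (stdDEG 4 μ h4) T0 (· + 3 - i) {i - 1, i}) ∧
  (∀ i, 3 < i → i < n → ∀ v0 : V, ∃ (μ : YoungDiagram) (h5 : μ.card = 5) (T0 : SYT μ),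
      G.ColorIso v0 (stdDEG 5 μ h5) T0 (· + 4 - i) {i - 2, i - 1, i})

/-- A dual equivalence graph of type `(n,N)`. -/
def IsDEG (G : SCG V n N) : Prop :=
  n ≤ N ∧ G.Ax1 ∧ G.Ax2 ∧ G.Ax3 ∧ G.Ax4 ∧ G.Ax5 ∧ G.Ax6

end SCG

/-! ### Quasisymmetric functions and Schur functions -/

/-- Gessel's fundamental quasisymmetric function `Q_σ` of degree `n`, for a
signature `s` (with `s j` the sign `σ_j` for `1 ≤ j ≤ n-1`), as a formal power
series in the variables `x_0, x_1, x_2, …` (representing `x_1, x_2, …`).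
It is the sum of `x_(i_1) ⋯ x_(i_n)` over weakly increasing sequences
`i_1 ≤ ⋯ ≤ i_n` such that `i_j = i_(j+1)` forces `σ_j = +1`. -/
def Qfun (R : Type) [CommRing R] (n : ℕ) (s : ℕ → ℤ) : MvPowerSeries ℕ R := fun d =>
  ((Set.ncard {f : Fin n → ℕ | Monotone f ∧
      (∀ (j : ℕ) (hj : j < n), 1 ≤ j → f ⟨j - 1, by omega⟩ = f ⟨j, hj⟩ → s j = 1) ∧
      ∑ k : Fin n, Finsupp.single (f k) 1 = d} : ℕ) : R)

/-- The Schur function `s_μ = Σ_(T ∈ SYT(μ)) Q_(σ(T))`. -/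
def schurPS (R : Type) [CommRing R] (μ : YoungDiagram) : MvPowerSeries ℕ R :=
  ∑ᶠ T : SYT μ, Qfun R μ.card (sytSgn T)

/-- Symmetry of a formal power series in `x_0, x_1, …`: invariance of the
coefficients under every permutation of the variables. -/
def MvPSSymmetric {R : Type} [CommRing R] (F : MvPowerSeries ℕ R) : Prop :=
  ∀ (g : Equiv.Perm ℕ) (d : ℕ →₀ ℕ),
    MvPowerSeries.coeff (Finsupp.equivMapDomain g d) F = MvPowerSeries.coeff d F

/-- Schur positivity: `F` is a nonnegative integer combination of Schur functions. -/
def SchurPositive (F : MvPowerSeries ℕ ℤ) : Prop :=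
  ∃ a : YoungDiagram → ℕ, (Function.support a).Finite ∧
    F = ∑ᶠ μ : YoungDiagram, (a μ : ℤ) • schurPS ℤ μ

/-! ### Words, ribbon words and the LLT graphs -/

/-- A standard word of length `n`: a bijection from positions `1,…,n` to
letters `1,…,n` (and `0` outside this range). -/
def IsStdWord (n : ℕ) (w : ℕ → ℕ) : Prop :=
  Set.BijOn w (Set.Icc 1 n) (Set.Icc 1 n) ∧ ∀ p, p ∉ Set.Icc 1 n → w p = 0

/-- A word of positive integers of length `n`. -/
def IsPosWord (n : ℕ) (w : ℕ → ℕ) : Prop :=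
  (∀ p ∈ Set.Icc 1 n, 1 ≤ w p) ∧ ∀ p, p ∉ Set.Icc 1 n → w p = 0

/-- The `k`-descent set of the pair `(w, c)` (as a set of pairs of positions). -/
def DesK (k n : ℕ) (w : ℕ → ℕ) (c : ℕ → ℤ) : Set (ℕ × ℕ) :=
  {pq : ℕ × ℕ | pq.1 ∈ Set.Icc 1 n ∧ pq.2 ∈ Set.Icc 1 n ∧ w pq.2 < w pq.1 ∧
    c pq.2 - c pq.1 = (k : ℤ)}

/-- The set of `k`-inversions of the pair `(w, c)`. -/
def InvK (k n : ℕ) (w : ℕ → ℕ) (c : ℕ → ℤ) : Set (ℕ × ℕ) :=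
  {pq : ℕ × ℕ | pq.1 ∈ Set.Icc 1 n ∧ pq.2 ∈ Set.Icc 1 n ∧ w pq.2 < w pq.1 ∧
    0 < c pq.2 - c pq.1 ∧ c pq.2 - c pq.1 < (k : ℤ)}

/-- The `k`-inversion number of `(w, c)`. -/
def invK (k n : ℕ) (w : ℕ → ℕ) (c : ℕ → ℤ) : ℕ := (InvK k n w c).ncard

/-- The pair `(w, c)` is a `k`-ribbon word. -/
def IsRibbonWord (k n : ℕ) (w : ℕ → ℕ) (c : ℕ → ℤ) : Prop :=
  ∀ p, 1 ≤ p → p + 1 ≤ n → c p = c (p + 1) →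
    (∃ h, h ∈ Set.Icc 1 n ∧ c h = c p - (k : ℤ) ∧ w p < w h ∧ w h ≤ w (p + 1)) ∧
    (∃ j, j ∈ Set.Icc 1 n ∧ c j = c p + (k : ℤ) ∧ w p ≤ w j ∧ w j < w (p + 1))

/-- The letter `a` appears to the left of the letter `b` in the word `w`. -/
def leftOf (n : ℕ) (w : ℕ → ℕ) (a b : ℕ) : Prop :=
  ∃ p q, p ∈ Set.Icc 1 n ∧ q ∈ Set.Icc 1 n ∧ p < q ∧ w p = a ∧ w q = b

/-- The descent signature of a word: `σ(w)_i = +1` iff `i` is left of `i+1`. -/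
def wordSgn (n : ℕ) (w : ℕ → ℕ) : ℕ → ℤ := fun i =>
  if leftOf n w i (i + 1) then 1 else -1

/-- The position of the letter `ℓ` in the word `w`. -/
def posOf (n : ℕ) (w : ℕ → ℕ) (ℓ : ℕ) : ℕ := sInf {p | p ∈ Set.Icc 1 n ∧ w p = ℓ}

/-- The involution `D_i^(k)` on standard words: if `i` lies between `i-1` and
`i+1` do nothing; otherwise apply `d_i` (switch the outer two of the letters
`i-1, i, i+1`) when `dist(i-1,i,i+1) > k`, and `d̃_i` (cycle the three letters
among their positions) when `dist(i-1,i,i+1) ≤ k`. -/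
def Dk (k n : ℕ) (c : ℕ → ℤ) (i : ℕ) (w : ℕ → ℕ) : ℕ → ℕ :=
  let p := posOf n w (i - 1)
  let q := posOf n w i
  let r := posOf n w (i + 1)
  if (p < q ∧ q < r) ∨ (r < q ∧ q < p) then w
  else
    let s1 := min p (min q r)
    let s3 := max p (max q r)
    let s2 := p + q + r - s1 - s3
    if (k : ℤ) < max |c p - c q| (max |c q - c r| |c p - c r|) then
      fun t => if t = s1 then w s3 else if t = s3 then w s1 else w t
    else if q = s1 then
      fun t => if t = s1 then w s2 else if t = s2 then w s3 else if t = s3 then w s1 else w t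
    else
      fun t => if t = s1 then w s3 else if t = s2 then w s1 else if t = s3 then w s2 else w t

/-- The vertex set `V^(k)_(c,D)`: standard `k`-ribbon words with content
vector `c` and `k`-descent set `D`. -/
def lltV (k n : ℕ) (c : ℕ → ℤ) (D : Set (ℕ × ℕ)) : Type :=
  {w : ℕ → ℕ // IsStdWord n w ∧ IsRibbonWord k n w c ∧ DesK k n w c = D}

instance lltV.finite (k n : ℕ) (c : ℕ → ℤ) (D : Set (ℕ × ℕ)) : Finite (lltV k n c D) := by
  apply Finite.of_injective
    (fun w : lltV k n c D => fun p : Fin (n + 1) => (⟨w.1 p, by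
      rcases Classical.em ((p : ℕ) ∈ Set.Icc 1 n) with h | h
      · exact Nat.lt_succ_of_le (w.2.1.1.mapsTo h).2
      · simp [w.2.1.2 _ h]⟩ : Fin (n + 1)))
  intro a b hab
  apply Subtype.ext
  funext p
  by_cases hp : p ∈ Set.Icc 1 n
  · have hlt : p < n + 1 := Nat.lt_succ_of_le hp.2
    exact congrArg Fin.val (congrFun hab ⟨p, hlt⟩)
  · rw [a.2.1.2 _ hp, b.2.1.2 _ hp]

/-- The signed, colored graph `G^(k)_(c,D)` on standard `k`-ribbon words with
content vector `c` and `k`-descent set `D`, with `i`-edges the pairs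
`{w, D_i^(k)(w)}` over vertices `w` admitting an `i`-neighbor. -/
def lltGraph (k n : ℕ) (c : ℕ → ℤ) (D : Set (ℕ × ℕ)) : SCG (lltV k n c D) n n where
  sgn w := wordSgn n w.1
  edge i v u := 1 < i ∧ i < n ∧ v ≠ u ∧
    ((wordSgn n v.1 (i - 1) = -wordSgn n v.1 i ∧ u.1 = Dk k n c i v.1) ∨
     (wordSgn n u.1 (i - 1) = -wordSgn n u.1 i ∧ v.1 = Dk k n c i u.1))
  sgn_pm := by
    intro v i _ _
    simp only [wordSgn]
    split
    · exact Or.inl rfl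
    · exact Or.inr rfl
  edge_symm := by
    rintro i v u ⟨h1, h2, h3, h4⟩
    exact ⟨h1, h2, h3.symm, h4.symm⟩
  edge_ne := fun i v u h => h.2.2.1
  edge_supp := fun i v u h => ⟨h.1, h.2.1⟩

/-- The descent set of a word. -/
def DesSet (n : ℕ) (w : ℕ → ℕ) : Finset ℕ :=
  (Finset.Icc 1 (n - 1)).filter fun p => w (p + 1) < w p

/-- The (skew) Schur function of the ribbon of size `n` whose descent set is
`E`, via its quasisymmetric expansion. -/
def ribbonSchurGF (n : ℕ) (E : Finset ℕ) : MvPowerSeries ℕ ℤ :=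
  ∑ᶠ w : {w : ℕ → ℕ // IsStdWord n w ∧ DesSet n w = E}, Qfun ℤ n (wordSgn n w.1)

/-! ### Tuples of skew tableaux and LLT polynomials -/

/-- A finite set of cells forming a skew shape `λ/ν`. -/
def IsSkewShape (S : Finset (ℕ × ℕ)) : Prop :=
  ∃ lam nu : YoungDiagram, nu ≤ lam ∧ S = lam.cells \ nu.cells

/-- A semistandard filling of the cell set `S`: positive entries on `S`, zero
elsewhere, weakly increasing along rows and strictly increasing along columns. -/
def SemistdOn (S : Finset (ℕ × ℕ)) (T : ℕ × ℕ → ℕ) : Prop :=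
  (∀ x ∈ S, 1 ≤ T x) ∧ (∀ x, x ∉ S → T x = 0) ∧
  (∀ r c1 c2, (r, c1) ∈ S → (r, c2) ∈ S → c1 ≤ c2 → T (r, c1) ≤ T (r, c2)) ∧
  (∀ r1 r2 cc, (r1, cc) ∈ S → (r2, cc) ∈ S → r1 < r2 → T (r1, cc) < T (r2, cc))

/-- A `k`-tuple of semistandard tableaux of shapes `S 0, …, S (k-1)`. -/
def SemistdTuple {k : ℕ} (S : Fin k → Finset (ℕ × ℕ)) (T : Fin k → ℕ × ℕ → ℕ) : Prop :=
  ∀ i, SemistdOn (S i) (T i)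

/-- The shifted content `c̃ = k·c(x) + i` of a cell `x` of the `i`-th shape. -/
def shiftedContent (k : ℕ) (x : Fin k × ℕ × ℕ) : ℤ :=
  (k : ℤ) * cellContent x.2 + (x.1 : ℤ)

/-- `e` enumerates the cells of the tuple of shapes `S` in content reading
order (increasing shifted content, southwest to northeast on diagonals). -/
def IsCellEnum (k n : ℕ) (S : Fin k → Finset (ℕ × ℕ)) (e : ℕ → Fin k × ℕ × ℕ) : Prop :=
  Set.BijOn e (Set.Icc 1 n) {ix : Fin k × ℕ × ℕ | ix.2 ∈ S ix.1} ∧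
  ∀ p q, p ∈ Set.Icc 1 n → q ∈ Set.Icc 1 n → p < q →
    (shiftedContent k (e p) < shiftedContent k (e q) ∨
     (shiftedContent k (e p) = shiftedContent k (e q) ∧ (e p).2.2 < (e q).2.2))

/-- The content reading word of a tuple `T`, via the enumeration `e`. -/
def readWord (n : ℕ) {k : ℕ} (e : ℕ → Fin k × ℕ × ℕ) (T : Fin k → ℕ × ℕ → ℕ) : ℕ → ℕ :=
  fun p => if p ∈ Set.Icc 1 n then T (e p).1 (e p).2 else 0

/-- The weight of a tuple of tableaux, as an exponent vector (the variable
`x_j` records entries equal to `j+1`). -/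
def tupleWeight {k : ℕ} (S : Fin k → Finset (ℕ × ℕ)) (T : Fin k → ℕ × ℕ → ℕ) : ℕ →₀ ℕ :=
  ∑ i : Fin k, ∑ x ∈ S i, Finsupp.single (T i x - 1) 1

/-- The number of `k`-inversions of a tuple of tableaux. -/
def invkTuple (k : ℕ) (S : Fin k → Finset (ℕ × ℕ)) (T : Fin k → ℕ × ℕ → ℕ) : ℕ :=
  Set.ncard {p : (Fin k × ℕ × ℕ) × (Fin k × ℕ × ℕ) |
    p.1.2 ∈ S p.1.1 ∧ p.2.2 ∈ S p.2.1 ∧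
    0 < shiftedContent k p.2 - shiftedContent k p.1 ∧
    shiftedContent k p.2 - shiftedContent k p.1 < (k : ℤ) ∧
    T p.2.1 p.2.2 < T p.1.1 p.1.2}

/-- The LLT polynomial `G̃^(k)_μ(x; q) = Σ_T q^(inv_k(T)) x^T`, as a formal
power series in `x` with coefficients in `ℤ[q]`. -/
def LLTpoly (k : ℕ) (S : Fin k → Finset (ℕ × ℕ)) : MvPowerSeries ℕ (Polynomial ℤ) :=
  fun d => ∑ᶠ T : {T : Fin k → ℕ × ℕ → ℕ // SemistdTuple S T ∧ tupleWeight S T = d},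
    (Polynomial.X : Polynomial ℤ) ^ invkTuple k S T.1

/-- The weight of a word. -/
def wordWeight (n : ℕ) (w : ℕ → ℕ) : ℕ →₀ ℕ :=
  ∑ p ∈ Finset.Icc 1 n, Finsupp.single (w p - 1) 1

/-- The generating function `Σ_((w,c) ∈ WRib_k(c,D)) q^(inv_k(w,c)) x^w` of all
`k`-ribbon words with content vector `c` and `k`-descent set `D`. -/
def ribbonWordGF (k n : ℕ) (c : ℕ → ℤ) (D : Set (ℕ × ℕ)) : MvPowerSeries ℕ (Polynomial ℤ) :=
  fun d => ∑ᶠ w : {w : ℕ → ℕ // IsPosWord n w ∧ IsRibbonWord k n w c ∧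
      DesK k n w c = D ∧ wordWeight n w = d},
    (Polynomial.X : Polynomial ℤ) ^ invK k n w.1 c

/-! ### Packages, types, local Schur positivity, axiom 4' and D graphs -/

namespace SCG

variable {V W : Type} {n N : ℕ}

/-- The `i`-package of a vertex: its connected component using only the edges
of colors `≤ i-3` or `≥ i+3`. -/
def packReach (G : SCG V n N) (i : ℕ) (v w : V) : Prop :=
  G.ReachS {j | j + 3 ≤ i ∨ i + 3 ≤ j} v w

/-- `w` admits a `j`-neighbor. -/
def Admits (G : SCG V n N) (j : ℕ) (w : V) : Prop := G.sgn w (j - 1) = -G.sgn w j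

/-- `w` has `i`-type W. -/
def TypeW (G : SCG V n N) (i : ℕ) (w : V) : Prop :=
  G.Admits (i - 1) w ∧ ∃ x, G.edge (i - 1) w x ∧ G.sgn x i = -G.sgn w i

/-- `w` has `i`-type A. -/
def TypeA (G : SCG V n N) (i : ℕ) (w : V) : Prop :=
  ¬G.TypeW i w ∧ ¬G.Admits (i - 2) w

/-- `w` has `i`-type B. -/
def TypeB (G : SCG V n N) (i : ℕ) (w : V) : Prop :=
  ¬G.TypeW i w ∧ G.Admits (i - 2) w ∧ ∃ x, G.edge (i - 2) w x ∧
    ((G.Admits (i - 1) w ∧ G.sgn w (i - 1) = -G.sgn x (i - 1)) ∨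
     (¬G.Admits (i - 1) w ∧ ∃ z, G.edge (i - 1) x z ∧ G.sgn w i = -G.sgn z i))

/-- `w` has `i`-type C. -/
def TypeC (G : SCG V n N) (i : ℕ) (w : V) : Prop :=
  ¬G.TypeW i w ∧ G.Admits (i - 2) w ∧ ∃ x, G.edge (i - 2) w x ∧
    ((G.Admits (i - 1) w ∧ G.sgn w (i - 1) = G.sgn x (i - 1)) ∨
     (¬G.Admits (i - 1) w ∧ ∃ z, G.edge (i - 1) x z ∧ G.sgn w i = G.sgn z i))

/-- Twice the number of edges of colors `i-1, i` in the connected component of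
`v0` under `E_(i-1) ∪ E_i` (each edge is counted once for each orientation). -/
def twoColorEdgeCount (G : SCG V n N) (i : ℕ) (v0 : V) : ℕ :=
  Set.ncard {t : ℕ × V × V | (t.1 = i - 1 ∨ t.1 = i) ∧ G.edge t.1 t.2.1 t.2.2 ∧
    G.ReachS {i - 1, i} v0 t.2.1}

/-- Axiom 4'a: every nontrivial connected component of `E_(i-1) ∪ E_i` has
either two or four edges. -/
def Ax4a (G : SCG V n N) : Prop :=
  ∀ i, 2 < i → i < n → ∀ v0 : V,
    (∃ a b j, G.ReachS {i - 1, i} v0 a ∧ (j = i - 1 ∨ j = i) ∧ G.edge j a b) →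
    G.twoColorEdgeCount i v0 = 4 ∨ G.twoColorEdgeCount i v0 = 8

/-- Axiom 4'b. -/
def Ax4b (G : SCG V n N) : Prop :=
  ∀ i, 3 < i → i < n → ∀ w x z, G.edge (i - 2) w x → G.edge i w z →
    G.sgn w (i - 1) = -G.sgn x (i - 1) → G.sgn w (i - 2) = -G.sgn z (i - 2) →
    ∃ y, G.edge (i - 1) w y ∧ (y = x ∨ y = z)

/-- Axiom 4'c. -/
def Ax4c (G : SCG V n N) : Prop :=
  ∀ i, 3 < i → i < n → ∀ w x, G.edge (i - 2) w x → G.TypeC i w → G.TypeW (i + 1) w →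
    G.TypeC i x ∧ G.TypeW (i + 1) x

/-- The restricted degree-4 signature of a vertex. -/
def sig3 (G : SCG V n N) (i : ℕ) (v : V) : ℕ → ℤ := fun j =>
  if j = 1 then G.sgn v (i - 2) else if j = 2 then G.sgn v (i - 1) else G.sgn v i

/-- The restricted degree-5 signature of a vertex. -/
def sig4 (G : SCG V n N) (i : ℕ) (v : V) : ℕ → ℤ := fun j =>
  if j = 1 then G.sgn v (i - 3) else if j = 2 then G.sgn v (i - 2)
  else if j = 3 then G.sgn v (i - 1) else G.sgn v i

/-- Local Schur positivity: the restricted degree-4 and degree-5 generating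
functions of the two- and three-color connected components are symmetric and
Schur positive. -/
def LSP (G : SCG V n N) : Prop :=
  (∀ i, 2 < i → i < n → ∀ v0 : V,
    MvPSSymmetric (∑ᶠ v : {v : V // G.ReachS {i - 1, i} v0 v}, Qfun ℤ 4 (G.sig3 i v.1)) ∧
    SchurPositive (∑ᶠ v : {v : V // G.ReachS {i - 1, i} v0 v}, Qfun ℤ 4 (G.sig3 i v.1))) ∧
  (∀ i, 3 < i → i < n → ∀ v0 : V,
    MvPSSymmetric (∑ᶠ v : {v : V // G.ReachS {i - 2, i - 1, i} v0 v}, Qfun ℤ 5 (G.sig4 i v.1)) ∧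
    SchurPositive (∑ᶠ v : {v : V // G.ReachS {i - 2, i - 1, i} v0 v}, Qfun ℤ 5 (G.sig4 i v.1)))

/-- A D graph: a locally Schur positive signed colored graph satisfying dual
equivalence axioms 1, 2, 3 and 5 together with axiom 4'. -/
def IsDGraph (G : SCG V n N) : Prop :=
  G.LSP ∧ G.Ax1 ∧ G.Ax2 ∧ G.Ax3 ∧ G.Ax5 ∧ G.Ax4a ∧ G.Ax4b ∧ G.Ax4c

/-- The set `W_i(G)` of vertices of `i`-type W whose `(i-1)`-neighbor and
`i`-neighbor differ. -/
def Wset (G : SCG V n N) (i : ℕ) : Set V :=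
  {w | G.TypeW i w ∧ ∀ x y, G.edge (i - 1) w x → G.edge i w y → x ≠ y}

/-- The set `X_i(G)` of vertices of `i`-type C with no `(i-1)`-neighbor such
that `E_(i-2) E_i ≠ E_i E_(i-2)` at the vertex. -/
def Xset (G : SCG V n N) (i : ℕ) : Set V :=
  {x | G.TypeC i x ∧ ¬G.Admits (i - 1) x ∧
    ∀ a b, (∃ z, G.edge i x z ∧ G.edge (i - 2) z a) →
      (∃ z, G.edge (i - 2) x z ∧ G.edge i z b) → a ≠ b}

/-- `f` is an isomorphism between the `i`-packages of `w` and `u`: a bijection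
preserving the truncated signature coordinates `σ_1, …, σ_(i-3), σ_(i+2), …,
σ_(N-1)` and all edges of colors `≤ i-3` or `≥ i+3`. -/
def PackIso (G : SCG V n N) (i : ℕ) (w u : V)
    (f : {v : V // G.packReach i w v} → {v : V // G.packReach i u v}) : Prop :=
  Function.Bijective f ∧
  (∀ v j, 1 ≤ j → (j + 3 ≤ i ∨ (i + 2 ≤ j ∧ j < N)) → G.sgn (f v).1 j = G.sgn v.1 j) ∧
  ∀ j, j + 3 ≤ i ∨ i + 3 ≤ j → ∀ a b, G.edge j a.1 b.1 ↔ G.edge j (f a).1 (f b).1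

/-- One half of the new `i`-edge relation used to redefine `E_i` from a package
isomorphism `f` between the `i`-packages of `w` and `u`. -/
def newEdgePhi (G : SCG V n N) (i : ℕ) (w u : V)
    (f : {v : V // G.packReach i w v} → {v : V // G.packReach i u v}) (a b : V) : Prop :=
  (∃ ha : G.packReach i w a, b = (f ⟨a, ha⟩).1) ∨
  (∃ a' b', ∃ ha' : G.packReach i w a', G.edge i a a' ∧ b' = (f ⟨a', ha'⟩).1 ∧ G.edge i b' b) ∨
  (G.edge i a b ∧ ¬G.packReach i w a ∧ ¬G.packReach i u a ∧
    ¬G.packReach i w b ∧ ¬G.packReach i u b)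

/-- The graph obtained from `G` by replacing the edges `E_i` according to the
involution determined by the package isomorphism `f` (this is `φ_i^w(G)`,
and also `ψ_i^x(G)` when applied to the appropriate packages). -/
def phiGraph (G : SCG V n N) (i : ℕ) (hi : 1 < i) (hin : i < n) (w u : V)
    (f : {v : V // G.packReach i w v} → {v : V // G.packReach i u v}) : SCG V n N where
  sgn := G.sgn
  edge j a b :=
    if j = i then a ≠ b ∧ (G.newEdgePhi i w u f a b ∨ G.newEdgePhi i w u f b a)
    else G.edge j a b
  sgn_pm := G.sgn_pm
  edge_symm := by
    intro j a b h
    by_cases hj : j = i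
    · rw [if_pos hj] at h ⊢
      exact ⟨h.1.symm, h.2.symm⟩
    · rw [if_neg hj] at h ⊢
      exact G.edge_symm j a b h
  edge_ne := by
    intro j a b h
    by_cases hj : j = i
    · rw [if_pos hj] at h; exact h.1
    · rw [if_neg hj] at h; exact G.edge_ne j a b h
  edge_supp := by
    intro j a b h
    by_cases hj : j = i
    · subst hj; exact ⟨hi, hin⟩
    · rw [if_neg hj] at h; exact G.edge_supp j a b h

end SCG

/-! ### Fillings and Macdonald polynomials via Haglund's formula -/

/-- The weight of a filling of a Young diagram. -/
def fillingWeight (ρ : YoungDiagram) (S : ℕ × ℕ → ℕ) : ℕ →₀ ℕ :=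
  ∑ x ∈ ρ.cells, Finsupp.single (S x - 1) 1

/-- The descent set of a filling: cells not in the first row whose entry
exceeds the entry immediately below (i.e. south, in French convention). -/
def macDes (ρ : YoungDiagram) (S : ℕ × ℕ → ℕ) : Set (ℕ × ℕ) :=
  {x | x ∈ ρ.cells ∧ 1 ≤ x.1 ∧ S (x.1 - 1, x.2) < S x}

/-- The arm length of a cell. -/
def armLen (ρ : YoungDiagram) (x : ℕ × ℕ) : ℕ := Set.ncard {c' | x.2 < c' ∧ (x.1, c') ∈ ρ.cells}

/-- The leg length of a cell. -/
def legLen (ρ : YoungDiagram) (x : ℕ × ℕ) : ℕ := Set.ncard {r' | x.1 < r' ∧ (r', x.2) ∈ ρ.cells}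

/-- The major index of a filling. -/
def macMaj (ρ : YoungDiagram) (S : ℕ × ℕ → ℕ) : ℕ :=
  (macDes ρ S).ncard + ∑ᶠ x ∈ macDes ρ S, legLen ρ x

/-- The set of inversion pairs (attacking pairs in reading order with the first
entry larger). -/
def macInvSet (ρ : YoungDiagram) (S : ℕ × ℕ → ℕ) : Set ((ℕ × ℕ) × (ℕ × ℕ)) :=
  {p | p.1 ∈ ρ.cells ∧ p.2 ∈ ρ.cells ∧
    ((p.1.1 = p.2.1 ∧ p.1.2 < p.2.2) ∨ (p.1.1 = p.2.1 + 1 ∧ p.2.2 < p.1.2)) ∧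
    S p.2 < S p.1}

/-- The inversion statistic of a filling. -/
def macInv (ρ : YoungDiagram) (S : ℕ × ℕ → ℕ) : ℕ :=
  (macInvSet ρ S).ncard - ∑ᶠ x ∈ macDes ρ S, armLen ρ x

/-- The transformed Macdonald polynomial via Haglund's formula
`H̃_μ(x; q, t) = Σ_S q^(inv S) t^(maj S) x^S`, with `q = X 0` and `t = X 1`. -/
def macdonald (ρ : YoungDiagram) : MvPowerSeries ℕ (MvPolynomial (Fin 2) ℤ) :=
  fun d => ∑ᶠ S : {S : ℕ × ℕ → ℕ //
      (∀ x ∈ ρ.cells, 1 ≤ S x) ∧ (∀ x, x ∉ ρ.cells → S x = 0) ∧ fillingWeight ρ S = d},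
    (MvPolynomial.X 0 : MvPolynomial (Fin 2) ℤ) ^ macInv ρ S.1 *
      (MvPolynomial.X 1 : MvPolynomial (Fin 2) ℤ) ^ macMaj ρ S.1

/-! ### Augmented standard dual equivalence graphs -/

/-- Standard tableaux of shape `ρ` augmented by the fixed filling `A` on the
entries `n+1, …, |ρ|` (the cell of the entry `v` being `A v`). -/
def AugSYT (ρ : YoungDiagram) (n : ℕ) (A : ℕ → ℕ × ℕ) : Type :=
  {T : SYT ρ // ∀ m : Fin ρ.card, n ≤ (m : ℕ) → T.cellOf m = A ((m : ℕ) + 1)}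

instance (ρ : YoungDiagram) (n : ℕ) (A : ℕ → ℕ × ℕ) : Finite (AugSYT ρ n A) := by
  unfold AugSYT; infer_instance

/-- The augmented standard dual equivalence graph `G_(λ,A)`, a signed colored
graph of type `(n, N)` on standard tableaux of shape `ρ` (of size `N`)
restricting to `A` on `ρ/λ`, with edges the elementary dual equivalences for
`i-1, i, i+1` with `i < n`. -/
def augDEG (n N : ℕ) (ρ : YoungDiagram) (hρ : ρ.card = N) (A : ℕ → ℕ × ℕ) :
    SCG (AugSYT ρ n A) n N where
  sgn T := sytSgn T.1
  edge i T U := i < n ∧ T ≠ U ∧ (stdEdgeCore ρ i T.1 U.1 ∨ stdEdgeCore ρ i U.1 T.1)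
  sgn_pm := by
    intro v i _ _
    simp only [sytSgn]
    split
    · exact Or.inl rfl
    · exact Or.inr rfl
  edge_symm := by
    rintro i T U ⟨h1, h2, h3⟩
    exact ⟨h1, h2.symm, h3.symm⟩
  edge_ne := fun i T U h => h.2.1
  edge_supp := by
    rintro i T U ⟨h1, h2, h3 | h3⟩ <;> exact ⟨h3.1, h1⟩

end
namespace S15

noncomputable section

section Defs

variable (k n : ℕ) (w : ℕ → ℕ) (c : ℕ → ℤ)

/-- Positions on "diagonal" with shifted content `ζ`. -/
def Pz (ζ : ℤ) : Finset ℕ := (Finset.Icc 1 n).filter fun p => c p = ζ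

/-- A bound on the shifted contents. -/
def mW : ℕ := (Finset.Icc 1 n).sup fun p => (c p).natAbs

/-- First position on a diagonal. -/
def firstP (ζ : ℤ) : ℕ := sInf {p | p ∈ Pz n c ζ}

/-- Number of entries on diagonal `ζ` that are `≤ w p`. -/
def Fc (ζ : ℤ) (p : ℕ) : ℕ := ((Pz n c ζ).filter fun q => w q ≤ w p).card

/-- Whether the starting row shifts down by one from diagonal `ζ` to `ζ + k`. -/
def dropP (ζ : ℤ) : Prop :=
  ((Pz n c ζ).Nonempty ∧ (Pz n c (ζ + k)).Nonempty ∧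
      w (firstP n c (ζ + k)) < w (firstP n c ζ)) ∨
    (¬(Pz n c ζ).Nonempty ∧ (Pz n c (ζ + k)).Nonempty)

def dropN (ζ : ℤ) : ℕ := if dropP k n w c ζ then 1 else 0

/-- Number of drops at or above diagonal `ζ`. -/
def cnt (ζ : ℤ) : ℕ :=
  ((Finset.Icc ζ (mW n c : ℤ)).filter fun e => (k : ℤ) ∣ (e - ζ) ∧ dropP k n w c e).card

/-- The starting row of diagonal `ζ`. -/
def Az (ζ : ℤ) : ℤ := (mW n c : ℤ) + k + cnt k n w c ζ

/-- One past the last row of diagonal `ζ`. -/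
def Bz (ζ : ℤ) : ℤ := Az k n w c ζ + (Pz n c ζ).card

/-- Row of the cell of position `p`. -/
def rowZ (p : ℕ) : ℤ := Az k n w c (c p) + p - firstP n c (c p)

/-- Column of the cell of position `p`. -/
def colZ (p : ℕ) : ℤ := rowZ k n w c p + (c p) / k

/-- The cell of position `p`. -/
def cellp (p : ℕ) : ℕ × ℕ := ((rowZ k n w c p).toNat, (colZ k n w c p).toNat)

/-- Shifted content attached to a cell of the `i`-th tableau. -/
def zeta (i : ℕ) (x : ℕ × ℕ) : ℤ := (k : ℤ) * ((x.2 : ℤ) - (x.1 : ℤ)) + (i : ℤ)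

/-- The `i`-th shape. -/
def SSf (i : Fin k) : Finset (ℕ × ℕ) :=
  ((Finset.Icc 1 n).filter fun p => (c p) % k = ((i : ℕ) : ℤ)).image (cellp k n w c)

/-- The tableau index of position `p`. -/
def ip (hk : 0 < k) (p : ℕ) : Fin k :=
  ⟨((c p) % k).toNat, by
    have h1 := Int.emod_nonneg (c p) (show (k : ℤ) ≠ 0 by omega)
    have h2 := Int.emod_lt_of_pos (c p) (show (0 : ℤ) < k by omega)
    omega⟩

/-- The filling. -/
def TT (i : Fin k) (x : ℕ × ℕ) : ℕ :=
  if h : ∃ p, p ∈ Finset.Icc 1 n ∧ (c p) % k = ((i : ℕ) : ℤ) ∧ cellp k n w c p = x then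
    w h.choose else 0

lemma mem_Pz {ζ : ℤ} {p : ℕ} : p ∈ Pz n c ζ ↔ 1 ≤ p ∧ p ≤ n ∧ c p = ζ := by
  simp [Pz, Finset.mem_Icc, Finset.mem_filter, and_assoc]

lemma Pz_bound {ζ : ℤ} {p : ℕ} (hp : p ∈ Pz n c ζ) :
    -(mW n c : ℤ) ≤ ζ ∧ ζ ≤ (mW n c : ℤ) := by
  rw [mem_Pz] at hp
  have h : (c p).natAbs ≤ mW n c :=
    Finset.le_sup (f := fun p => (c p).natAbs) (Finset.mem_Icc.mpr ⟨hp.1, hp.2.1⟩)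
  have h3 := hp.2.2
  omega

end Defs

variable {k n : ℕ} {w : ℕ → ℕ} {c : ℕ → ℤ}

lemma Pz_contig (hc : ∀ p q, 1 ≤ p → p ≤ q → q ≤ n → c p ≤ c q) {ζ : ℤ} {p q r : ℕ}
    (hp : p ∈ Pz n c ζ) (hq : q ∈ Pz n c ζ) (h1 : p ≤ r) (h2 : r ≤ q) : r ∈ Pz n c ζ := by
  rw [mem_Pz] at hp hq ⊢
  have e1 := hc p r hp.1 h1 (le_trans h2 hq.2.1)
  have e2 := hc r q (le_trans hp.1 h1) h2 hq.2.1
  exact ⟨le_trans hp.1 h1, le_trans h2 hq.2.1, by omega⟩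

lemma firstP_mem {ζ : ℤ} (h : (Pz n c ζ).Nonempty) : firstP n c ζ ∈ Pz n c ζ := by
  obtain ⟨x, hx⟩ := h
  exact Nat.sInf_mem (⟨x, hx⟩ : {p | p ∈ Pz n c ζ}.Nonempty)

lemma firstP_le {ζ : ℤ} {p : ℕ} (hp : p ∈ Pz n c ζ) : firstP n c ζ ≤ p := Nat.sInf_le hp

lemma Pz_struct (hc : ∀ p q, 1 ≤ p → p ≤ q → q ≤ n → c p ≤ c q) {ζ : ℤ}
    (h : (Pz n c ζ).Nonempty) :
    ∃ a b : ℕ, 1 ≤ a ∧ a ≤ b ∧ b ≤ n ∧ Pz n c ζ = Finset.Icc a b ∧ firstP n c ζ = a := by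
  have ha : (Pz n c ζ).min' h ∈ Pz n c ζ := Finset.min'_mem _ h
  have hb : (Pz n c ζ).max' h ∈ Pz n c ζ := Finset.max'_mem _ h
  refine ⟨(Pz n c ζ).min' h, (Pz n c ζ).max' h, ?_, ?_, ?_, ?_, ?_⟩
  · exact ((mem_Pz n c).mp ha).1
  · exact Finset.min'_le _ _ hb
  · exact ((mem_Pz n c).mp hb).2.1
  · apply Finset.Subset.antisymm
    · intro x hx
      exact Finset.mem_Icc.mpr ⟨Finset.min'_le _ _ hx, Finset.le_max' _ _ hx⟩
    · intro x hx
      rw [Finset.mem_Icc] at hx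
      exact Pz_contig hc ha hb hx.1 hx.2
  · exact le_antisymm (firstP_le ha) (Finset.min'_le _ _ (firstP_mem h))

lemma wconsec (hr : IsRibbonWord k n w c) {ζ : ℤ} {p : ℕ}
    (hp : p ∈ Pz n c ζ) (hp1 : p + 1 ∈ Pz n c ζ) : w p < w (p + 1) := by
  rw [mem_Pz] at hp hp1
  obtain ⟨⟨h, _, _, hw1, hw2⟩, _⟩ := hr p hp.1 hp1.2.1 (by omega)
  omega

lemma wmono (hr : IsRibbonWord k n w c) (hc : ∀ p q, 1 ≤ p → p ≤ q → q ≤ n → c p ≤ c q)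
    {ζ : ℤ} {p q : ℕ} (hp : p ∈ Pz n c ζ) (hq : q ∈ Pz n c ζ) (hpq : p < q) : w p < w q := by
  have H : ∀ t : ℕ, p + t + 1 ≤ q → w p < w (p + t + 1) := by
    intro t
    induction t with
    | zero =>
      intro hle
      exact wconsec hr hp (Pz_contig hc hp hq (by omega) hle)
    | succ t ih =>
      intro hle
      have h1 : p + t + 1 ∈ Pz n c ζ := Pz_contig hc hp hq (by omega) (by omega)
      have h2 : p + t + 1 + 1 ∈ Pz n c ζ := Pz_contig hc hp hq (by omega) (by omega)
      have h3 := wconsec hr h1 h2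
      have h4 := ih (by omega)
      have e : p + (t + 1) + 1 = p + t + 1 + 1 := by omega
      rw [e]
      omega
  have h5 := H (q - p - 1) (by omega)
  have e : p + (q - p - 1) + 1 = q := by omega
  rwa [e] at h5

lemma wmono_le (hr : IsRibbonWord k n w c) (hc : ∀ p q, 1 ≤ p → p ≤ q → q ≤ n → c p ≤ c q)
    {ζ : ℤ} {p q : ℕ} (hp : p ∈ Pz n c ζ) (hq : q ∈ Pz n c ζ) (hpq : p ≤ q) : w p ≤ w q := by
  rcases eq_or_lt_of_le hpq with rfl | h
  · exact le_refl _
  · exact le_of_lt (wmono hr hc hp hq h)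

lemma pos_lt (hr : IsRibbonWord k n w c) (hc : ∀ p q, 1 ≤ p → p ≤ q → q ≤ n → c p ≤ c q)
    {ζ : ℤ} {p q : ℕ} (hp : p ∈ Pz n c ζ) (hq : q ∈ Pz n c ζ) (h : w p < w q) : p < q := by
  by_contra h'
  push_neg at h'
  have := wmono_le hr hc hq hp h'
  omega

lemma Rh (hr : IsRibbonWord k n w c) {ζ : ℤ} {p : ℕ}
    (hp : p ∈ Pz n c ζ) (hp1 : p + 1 ∈ Pz n c ζ) :
    ∃ h, h ∈ Pz n c (ζ - k) ∧ w p < w h ∧ w h ≤ w (p + 1) := by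
  rw [mem_Pz] at hp hp1
  obtain ⟨⟨h, hmem, hch, hw1, hw2⟩, _⟩ := hr p hp.1 hp1.2.1 (by omega)
  rw [Set.mem_Icc] at hmem
  exact ⟨h, (mem_Pz n c).mpr ⟨hmem.1, hmem.2, by omega⟩, hw1, hw2⟩

lemma Rj (hr : IsRibbonWord k n w c) {ζ : ℤ} {p : ℕ}
    (hp : p ∈ Pz n c ζ) (hp1 : p + 1 ∈ Pz n c ζ) :
    ∃ j, j ∈ Pz n c (ζ + k) ∧ w p ≤ w j ∧ w j < w (p + 1) := by
  rw [mem_Pz] at hp hp1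
  obtain ⟨_, ⟨j, hmem, hcj, hw1, hw2⟩⟩ := hr p hp.1 hp1.2.1 (by omega)
  rw [Set.mem_Icc] at hmem
  exact ⟨j, (mem_Pz n c).mpr ⟨hmem.1, hmem.2, by omega⟩, hw1, hw2⟩

lemma Fstep (hr : IsRibbonWord k n w c) (hc : ∀ p q, 1 ≤ p → p ≤ q → q ≤ n → c p ≤ c q)
    {ζ : ℤ} {p : ℕ} (hp : p ∈ Pz n c (ζ + k)) (hp1 : p + 1 ∈ Pz n c (ζ + k)) :
    Fc n w c ζ (p + 1) = Fc n w c ζ p + 1 := by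
  have hww : w p < w (p + 1) := wconsec hr hp hp1
  unfold Fc
  set S0 := (Pz n c ζ).filter (fun q => w q ≤ w p) with hS0
  set S1 := (Pz n c ζ).filter (fun q => w q ≤ w (p + 1)) with hS1
  have hsub : S0 ⊆ S1 := by
    intro q hq
    rw [hS0, Finset.mem_filter] at hq
    rw [hS1, Finset.mem_filter]
    exact ⟨hq.1, by omega⟩
  obtain ⟨h, hh, hwh1, hwh2⟩ := by
    have := Rh hr hp hp1
    rwa [show ζ + (k : ℤ) - k = ζ by ring] at this
  have hhS1 : h ∈ S1 := by rw [hS1, Finset.mem_filter]; exact ⟨hh, hwh2⟩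
  have hhS0 : h ∉ S0 := by
    rw [hS0, Finset.mem_filter]
    push_neg
    intro _
    omega
  have hlt : S0.card < S1.card :=
    Finset.card_lt_card ((Finset.ssubset_iff_of_subset hsub).mpr ⟨h, hhS1, hhS0⟩)
  by_contra hne
  have hΔcard : (S1 \ S0).card = S1.card - S0.card := Finset.card_sdiff_of_subset hsub
  have hΔne : (S1 \ S0).Nonempty := Finset.card_pos.mp (by omega)
  set q := (S1 \ S0).min' hΔne with hqdef
  have hqΔ : q ∈ S1 \ S0 := Finset.min'_mem _ _
  obtain ⟨q', hq'Δ, hq'ne⟩ := Finset.exists_mem_ne (s := S1 \ S0) (by omega) q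
  have hqq' : q < q' := lt_of_le_of_ne (Finset.min'_le _ _ hq'Δ) (Ne.symm hq'ne)
  rw [Finset.mem_sdiff, hS1, hS0, Finset.mem_filter, Finset.mem_filter] at hqΔ hq'Δ
  obtain ⟨⟨hqP, hqw⟩, hqn⟩ := hqΔ
  obtain ⟨⟨hq'P, hq'w⟩, _⟩ := hq'Δ
  push_neg at hqn
  have hqw0 : w p < w q := hqn hqP
  have hq1P : q + 1 ∈ Pz n c ζ := Pz_contig hc hqP hq'P (by omega) (by omega)
  have hwq1 : w (q + 1) ≤ w q' := wmono_le hr hc hq1P hq'P (by omega)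
  obtain ⟨j, hj, hjw1, hjw2⟩ := Rj hr hqP hq1P
  have h3 : p < j := pos_lt hr hc hp hj (by omega)
  have h4 : j < p + 1 := pos_lt hr hc hj hp1 (by omega)
  omega

lemma Fmin (hr : IsRibbonWord k n w c) (hc : ∀ p q, 1 ≤ p → p ≤ q → q ≤ n → c p ≤ c q)
    {ζ : ℤ} (hne : (Pz n c (ζ + k)).Nonempty) :
    Fc n w c ζ (firstP n c (ζ + k)) ≤ 1 := by
  set pm := firstP n c (ζ + k) with hpm
  by_contra hgt
  push_neg at hgt
  unfold Fc at hgt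
  set S0 := (Pz n c ζ).filter (fun q => w q ≤ w pm) with hS0
  have hS0ne : S0.Nonempty := Finset.card_pos.mp (by omega)
  set q := S0.min' hS0ne with hqdef
  have hqm : q ∈ S0 := Finset.min'_mem _ _
  obtain ⟨q', hq'm, hq'ne⟩ := Finset.exists_mem_ne (s := S0) (by omega) q
  have hqq' : q < q' := lt_of_le_of_ne (Finset.min'_le _ _ hq'm) (Ne.symm hq'ne)
  rw [hS0, Finset.mem_filter] at hqm hq'm
  have hq1P : q + 1 ∈ Pz n c ζ := Pz_contig hc hqm.1 hq'm.1 (by omega) (by omega)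
  obtain ⟨j, hj, hjw1, hjw2⟩ := Rj hr hqm.1 hq1P
  have hwle : w (q + 1) ≤ w q' := wmono_le hr hc hq1P hq'm.1 (by omega)
  have hj1 : j < pm := pos_lt hr hc hj (firstP_mem hne) (by omega)
  have := firstP_le hj
  omega

lemma Ftop (hr : IsRibbonWord k n w c) (hc : ∀ p q, 1 ≤ p → p ≤ q → q ≤ n → c p ≤ c q)
    {ζ : ℤ} {b : ℕ} (hb : b ∈ Pz n c (ζ + k)) (hmax : ∀ q ∈ Pz n c (ζ + k), q ≤ b) :
    (Pz n c ζ).card ≤ Fc n w c ζ b + 1 := by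
  by_contra hgt
  push_neg at hgt
  unfold Fc at hgt
  have hsplit := Finset.card_filter_add_card_filter_not
    (s := Pz n c ζ) (p := fun q => w q ≤ w b)
  set C := (Pz n c ζ).filter (fun q => ¬ (w q ≤ w b)) with hC
  have hCne : C.Nonempty := Finset.card_pos.mp (by omega)
  set q := C.min' hCne with hqdef
  have hqm : q ∈ C := Finset.min'_mem _ _
  obtain ⟨q', hq'm, hq'ne⟩ := Finset.exists_mem_ne (s := C) (by omega) q
  have hqq' : q < q' := lt_of_le_of_ne (Finset.min'_le _ _ hq'm) (Ne.symm hq'ne)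
  rw [hC, Finset.mem_filter] at hqm hq'm
  have hq1P : q + 1 ∈ Pz n c ζ := Pz_contig hc hqm.1 hq'm.1 (by omega) (by omega)
  obtain ⟨j, hj, hjw1, hjw2⟩ := Rj hr hqm.1 hq1P
  have hblt : b < j := pos_lt hr hc hb hj (by omega)
  have := hmax j hj
  omega

lemma Fval (hr : IsRibbonWord k n w c) (hc : ∀ p q, 1 ≤ p → p ≤ q → q ≤ n → c p ≤ c q)
    {ζ : ℤ} (hne : (Pz n c (ζ + k)).Nonempty) {p : ℕ} (hp : p ∈ Pz n c (ζ + k)) :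
    Fc n w c ζ p + firstP n c (ζ + k) = Fc n w c ζ (firstP n c (ζ + k)) + p := by
  set pm := firstP n c (ζ + k) with hpm
  have hpmP : pm ∈ Pz n c (ζ + k) := firstP_mem hne
  have hle : pm ≤ p := firstP_le hp
  have H : ∀ t : ℕ, pm + t ∈ Pz n c (ζ + k) → Fc n w c ζ (pm + t) = Fc n w c ζ pm + t := by
    intro t
    induction t with
    | zero => intro _; simp
    | succ t ih =>
      intro ht
      have h1 : pm + t ∈ Pz n c (ζ + k) := Pz_contig hc hpmP ht (by omega) (by omega)
      have h2 : pm + t + 1 ∈ Pz n c (ζ + k) := by rwa [show pm + t + 1 = pm + (t + 1) by omega]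
      have h3 := Fstep hr hc h1 h2
      have h4 := ih h1
      rw [show pm + (t + 1) = pm + t + 1 by omega]
      omega
  have h5 := H (p - pm) (by rwa [show pm + (p - pm) = p by omega])
  rw [show pm + (p - pm) = p by omega] at h5
  omega

lemma dropN_le (ζ : ℤ) : dropN k n w c ζ ≤ 1 := by
  unfold dropN
  split <;> omega

lemma Fpm (hr : IsRibbonWord k n w c) (hc : ∀ p q, 1 ≤ p → p ≤ q → q ≤ n → c p ≤ c q)
    {ζ : ℤ} (h1 : (Pz n c ζ).Nonempty) (h2 : (Pz n c (ζ + k)).Nonempty) :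
    Fc n w c ζ (firstP n c (ζ + k)) + dropN k n w c ζ = 1 := by
  by_cases hlt : w (firstP n c (ζ + k)) < w (firstP n c ζ)
  · have hd : dropP k n w c ζ := Or.inl ⟨h1, h2, hlt⟩
    have h0 : Fc n w c ζ (firstP n c (ζ + k)) = 0 := by
      unfold Fc
      rw [Finset.card_eq_zero, Finset.filter_eq_empty_iff]
      intro q hq
      have := wmono_le hr hc (firstP_mem h1) hq (firstP_le hq)
      omega
    rw [h0, dropN, if_pos hd]
  · have hd : ¬ dropP k n w c ζ := by
      rintro (⟨_, _, h⟩ | ⟨hne, _⟩)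
      · exact hlt h
      · exact hne h1
    have hge : 1 ≤ Fc n w c ζ (firstP n c (ζ + k)) := by
      unfold Fc
      apply Finset.card_pos.mpr
      exact ⟨firstP n c ζ, Finset.mem_filter.mpr ⟨firstP_mem h1, by omega⟩⟩
    have hle := Fmin hr hc h2
    rw [dropN, if_neg hd]
    omega

lemma M3 (hr : IsRibbonWord k n w c) (hc : ∀ p q, 1 ≤ p → p ≤ q → q ≤ n → c p ≤ c q)
    (ζ : ℤ) : (Pz n c (ζ + k)).card ≤ (Pz n c ζ).card + dropN k n w c ζ := by
  by_cases h2 : (Pz n c (ζ + k)).Nonempty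
  · by_cases h1 : (Pz n c ζ).Nonempty
    · obtain ⟨a, b, ha1, hab, hbn, hIcc, hfa⟩ := Pz_struct hc h2
      have hbP : b ∈ Pz n c (ζ + k) := by rw [hIcc]; exact Finset.mem_Icc.mpr ⟨hab, le_refl b⟩
      have hFb := Fval hr hc h2 hbP
      have hFpm := Fpm hr hc h1 h2
      have hcard : (Pz n c (ζ + k)).card = b + 1 - a := by rw [hIcc, Nat.card_Icc]
      have hFle : Fc n w c ζ b ≤ (Pz n c ζ).card := Finset.card_filter_le _ _
      rw [hfa] at hFb hFpm
      omega
    · have hd : dropP k n w c ζ := Or.inr ⟨h1, h2⟩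
      have hcard : (Pz n c (ζ + k)).card ≤ 1 := by
        by_contra hc2
        obtain ⟨a, b, ha1, hab, hbn, hIcc, hfa⟩ := Pz_struct hc h2
        have hcard2 : (Pz n c (ζ + k)).card = b + 1 - a := by rw [hIcc, Nat.card_Icc]
        have haP : a ∈ Pz n c (ζ + k) := by
          rw [hIcc]; exact Finset.mem_Icc.mpr ⟨le_refl a, hab⟩
        have ha1P : a + 1 ∈ Pz n c (ζ + k) := by
          rw [hIcc]; exact Finset.mem_Icc.mpr ⟨by omega, by omega⟩
        obtain ⟨h', hh', _, _⟩ := by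
          have := Rh hr haP ha1P
          rwa [show ζ + (k : ℤ) - k = ζ by ring] at this
        exact h1 ⟨h', hh'⟩
      have : dropN k n w c ζ = 1 := by rw [dropN, if_pos hd]
      omega
  · rw [Finset.not_nonempty_iff_eq_empty] at h2
    rw [h2]
    simp

lemma M4 (hr : IsRibbonWord k n w c) (hc : ∀ p q, 1 ≤ p → p ≤ q → q ≤ n → c p ≤ c q)
    (ζ : ℤ) : (Pz n c ζ).card + dropN k n w c ζ ≤ (Pz n c (ζ + k)).card + 1 := by
  by_cases h1 : (Pz n c ζ).Nonempty
  · by_cases h2 : (Pz n c (ζ + k)).Nonempty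
    · obtain ⟨a, b, ha1, hab, hbn, hIcc, hfa⟩ := Pz_struct hc h2
      have hbP : b ∈ Pz n c (ζ + k) := by rw [hIcc]; exact Finset.mem_Icc.mpr ⟨hab, le_refl b⟩
      have hmax : ∀ q ∈ Pz n c (ζ + k), q ≤ b := by
        intro q hq; rw [hIcc, Finset.mem_Icc] at hq; exact hq.2
      have htop := Ftop hr hc hbP hmax
      have hFb := Fval hr hc h2 hbP
      have hFpm := Fpm hr hc h1 h2
      have hcard : (Pz n c (ζ + k)).card = b + 1 - a := by rw [hIcc, Nat.card_Icc]
      rw [hfa] at hFb hFpm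
      omega
    · have hd : ¬ dropP k n w c ζ := by
        rintro (⟨_, h, _⟩ | ⟨hne, h⟩) <;> exact h2 h
      have hcard : (Pz n c ζ).card ≤ 1 := by
        by_contra hc2
        obtain ⟨a, b, ha1, hab, hbn, hIcc, hfa⟩ := Pz_struct hc h1
        have hcard2 : (Pz n c ζ).card = b + 1 - a := by rw [hIcc, Nat.card_Icc]
        have haP : a ∈ Pz n c ζ := by
          rw [hIcc]; exact Finset.mem_Icc.mpr ⟨le_refl a, hab⟩
        have ha1P : a + 1 ∈ Pz n c ζ := by
          rw [hIcc]; exact Finset.mem_Icc.mpr ⟨by omega, by omega⟩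
        obtain ⟨j, hj, _, _⟩ := Rj hr haP ha1P
        exact h2 ⟨j, hj⟩
      have : dropN k n w c ζ = 0 := by rw [dropN, if_neg hd]
      omega
  · rw [Finset.not_nonempty_iff_eq_empty] at h1
    have := dropN_le (k := k) (n := n) (w := w) (c := c) ζ
    rw [h1]
    simp
    omega

lemma dropP_bound (hk : 0 < k) {ζ : ℤ} (hd : dropP k n w c ζ) : ζ + k ≤ (mW n c : ℤ) := by
  have hne : (Pz n c (ζ + k)).Nonempty := by rcases hd with ⟨_, h, _⟩ | ⟨_, h⟩ <;> exact h
  obtain ⟨p, hp⟩ := hne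
  exact (Pz_bound n c hp).2

lemma cnt_rel (hk : 0 < k) (ζ : ℤ) :
    cnt k n w c ζ = dropN k n w c ζ + cnt k n w c (ζ + k) := by
  by_cases hζ : ζ + k ≤ (mW n c : ℤ)
  · by_cases hd : dropP k n w c ζ
    · have hins : (Finset.Icc ζ (mW n c : ℤ)).filter
            (fun e => (k : ℤ) ∣ (e - ζ) ∧ dropP k n w c e)
          = insert ζ ((Finset.Icc (ζ + k) (mW n c : ℤ)).filter
            fun e => (k : ℤ) ∣ (e - (ζ + k)) ∧ dropP k n w c e) := by
        ext e
        simp only [Finset.mem_insert, Finset.mem_filter, Finset.mem_Icc]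
        constructor
        · rintro ⟨⟨he1, he2⟩, hdvd, hde⟩
          rcases eq_or_lt_of_le he1 with he | he
          · exact Or.inl he.symm
          · refine Or.inr ⟨⟨?_, he2⟩, ?_, hde⟩
            · have := Int.le_of_dvd (by omega) hdvd
              omega
            · have hee : e - (ζ + k) = (e - ζ) - k := by ring
              rw [hee]
              exact dvd_sub hdvd dvd_rfl
        · rintro (rfl | ⟨⟨he1, he2⟩, hdvd, hde⟩)
          · exact ⟨⟨le_refl _, by omega⟩, by simp, hd⟩
          · refine ⟨⟨by omega, he2⟩, ?_, hde⟩
            have hee : e - ζ = (e - (ζ + k)) + k := by ring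
            rw [hee]
            exact dvd_add hdvd dvd_rfl
      have hnotmem : ζ ∉ (Finset.Icc (ζ + k) (mW n c : ℤ)).filter
          (fun e => (k : ℤ) ∣ (e - (ζ + k)) ∧ dropP k n w c e) := by
        intro hmem
        rw [Finset.mem_filter, Finset.mem_Icc] at hmem
        omega
      unfold cnt
      rw [hins, Finset.card_insert_of_notMem hnotmem, dropN, if_pos hd]
      omega
    · have heq : (Finset.Icc ζ (mW n c : ℤ)).filter
            (fun e => (k : ℤ) ∣ (e - ζ) ∧ dropP k n w c e)
          = (Finset.Icc (ζ + k) (mW n c : ℤ)).filter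
            (fun e => (k : ℤ) ∣ (e - (ζ + k)) ∧ dropP k n w c e) := by
        ext e
        simp only [Finset.mem_filter, Finset.mem_Icc]
        constructor
        · rintro ⟨⟨he1, he2⟩, hdvd, hde⟩
          have hne : e ≠ ζ := by rintro rfl; exact hd hde
          refine ⟨⟨?_, he2⟩, ?_, hde⟩
          · have := Int.le_of_dvd (by omega) hdvd
            omega
          · have hee : e - (ζ + k) = (e - ζ) - k := by ring
            rw [hee]
            exact dvd_sub hdvd dvd_rfl
        · rintro ⟨⟨he1, he2⟩, hdvd, hde⟩
          refine ⟨⟨by omega, he2⟩, ?_, hde⟩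
          have hee : e - ζ = (e - (ζ + k)) + k := by ring
          rw [hee]
          exact dvd_add hdvd dvd_rfl
      unfold cnt
      rw [heq, dropN, if_neg hd]
      omega
  · have hd : ¬ dropP k n w c ζ := fun hd => hζ (dropP_bound hk hd)
    have e2 : cnt k n w c (ζ + k) = 0 := by
      unfold cnt
      rw [Finset.card_eq_zero, Finset.filter_eq_empty_iff]
      intro e he
      rw [Finset.mem_Icc] at he
      omega
    have e1 : cnt k n w c ζ = 0 := by
      unfold cnt
      rw [Finset.card_eq_zero, Finset.filter_eq_empty_iff]
      rintro e he ⟨hdvd, hde⟩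
      rw [Finset.mem_Icc] at he
      have hb := dropP_bound hk hde
      have hne : e ≠ ζ := by rintro rfl; exact hd hde
      have := Int.le_of_dvd (by omega) hdvd
      omega
    rw [e1, e2, dropN, if_neg hd]

lemma Aup (hk : 0 < k) (ζ : ℤ) : Az k n w c (ζ + k) ≤ Az k n w c ζ := by
  unfold Az
  have := cnt_rel (n := n) (w := w) (c := c) hk ζ
  omega

lemma Adown (hk : 0 < k) (ζ : ℤ) : Az k n w c ζ ≤ Az k n w c (ζ + k) + 1 := by
  unfold Az
  have h1 := cnt_rel (n := n) (w := w) (c := c) hk ζ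
  have h2 := dropN_le (k := k) (n := n) (w := w) (c := c) ζ
  omega

lemma Bup (hk : 0 < k) (hr : IsRibbonWord k n w c)
    (hc : ∀ p q, 1 ≤ p → p ≤ q → q ≤ n → c p ≤ c q) (ζ : ℤ) :
    Bz k n w c (ζ + k) ≤ Bz k n w c ζ := by
  unfold Bz Az
  have h1 := cnt_rel (n := n) (w := w) (c := c) hk ζ
  have h2 := M3 hr hc ζ
  omega

lemma Bdown (hk : 0 < k) (hr : IsRibbonWord k n w c)
    (hc : ∀ p q, 1 ≤ p → p ≤ q → q ≤ n → c p ≤ c q) (ζ : ℤ) :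
    Bz k n w c ζ ≤ Bz k n w c (ζ + k) + 1 := by
  unfold Bz Az
  have h1 := cnt_rel (n := n) (w := w) (c := c) hk ζ
  have h2 := M4 hr hc ζ
  omega

lemma AupT (hk : 0 < k) (ζ : ℤ) (t : ℕ) : Az k n w c (ζ + k * t) ≤ Az k n w c ζ := by
  induction t with
  | zero => simp
  | succ t ih =>
    have h := Aup (n := n) (w := w) (c := c) hk (ζ + k * t)
    have e : ζ + (k : ℤ) * ((t : ℕ) + 1 : ℕ) = ζ + k * t + k := by push_cast; ring
    rw [e]
    exact le_trans h ih

lemma AdownT (hk : 0 < k) (ζ : ℤ) (t : ℕ) : Az k n w c ζ ≤ Az k n w c (ζ + k * t) + t := by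
  induction t with
  | zero => simp
  | succ t ih =>
    have h := Adown (n := n) (w := w) (c := c) hk (ζ + k * t)
    have e : ζ + (k : ℤ) * ((t : ℕ) + 1 : ℕ) = ζ + k * t + k := by push_cast; ring
    rw [e]
    push_cast
    omega

lemma BupT (hk : 0 < k) (hr : IsRibbonWord k n w c)
    (hc : ∀ p q, 1 ≤ p → p ≤ q → q ≤ n → c p ≤ c q) (ζ : ℤ) (t : ℕ) :
    Bz k n w c (ζ + k * t) ≤ Bz k n w c ζ := by
  induction t with
  | zero => simp
  | succ t ih =>
    have h := Bup hk hr hc (ζ + k * t)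
    have e : ζ + (k : ℤ) * ((t : ℕ) + 1 : ℕ) = ζ + k * t + k := by push_cast; ring
    rw [e]
    exact le_trans h ih

lemma BdownT (hk : 0 < k) (hr : IsRibbonWord k n w c)
    (hc : ∀ p q, 1 ≤ p → p ≤ q → q ≤ n → c p ≤ c q) (ζ : ℤ) (t : ℕ) :
    Bz k n w c ζ ≤ Bz k n w c (ζ + k * t) + t := by
  induction t with
  | zero => simp
  | succ t ih =>
    have h := Bdown hk hr hc (ζ + k * t)
    have e : ζ + (k : ℤ) * ((t : ℕ) + 1 : ℕ) = ζ + k * t + k := by push_cast; ring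
    rw [e]
    push_cast
    omega

lemma rowZ_eq (hc : ∀ p q, 1 ≤ p → p ≤ q → q ≤ n → c p ≤ c q) {ζ : ℤ} {p : ℕ}
    (hp : p ∈ Pz n c ζ) :
    rowZ k n w c p = Az k n w c ζ + p - firstP n c ζ ∧
      Az k n w c ζ ≤ rowZ k n w c p ∧ rowZ k n w c p < Bz k n w c ζ := by
  have hcp : c p = ζ := ((mem_Pz n c).mp hp).2.2
  obtain ⟨a, b, ha1, hab, hbn, hIcc, hfa⟩ := Pz_struct hc ⟨p, hp⟩
  have hpab : a ≤ p ∧ p ≤ b := by rw [hIcc] at hp; exact Finset.mem_Icc.mp hp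
  have hcard : (Pz n c ζ).card = b + 1 - a := by rw [hIcc, Nat.card_Icc]
  unfold rowZ Bz
  rw [hcp, hfa]
  refine ⟨rfl, by omega, by omega⟩

lemma exists_point (hc : ∀ p q, 1 ≤ p → p ≤ q → q ≤ n → c p ≤ c q) {ζ : ℤ} {r : ℤ}
    (h1 : Az k n w c ζ ≤ r) (h2 : r < Bz k n w c ζ) :
    ∃ q, q ∈ Pz n c ζ ∧ rowZ k n w c q = r := by
  have hpos : 0 < (Pz n c ζ).card := by unfold Bz at h2; omega
  have hne : (Pz n c ζ).Nonempty := Finset.card_pos.mp hpos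
  obtain ⟨a, b, ha1, hab, hbn, hIcc, hfa⟩ := Pz_struct hc hne
  have hcard : (Pz n c ζ).card = b + 1 - a := by rw [hIcc, Nat.card_Icc]
  have hcard' : r - Az k n w c ζ < ((Pz n c ζ).card : ℤ) := by unfold Bz at h2; omega
  set q := a + (r - Az k n w c ζ).toNat with hq
  have hqP : q ∈ Pz n c ζ := by
    rw [hIcc, Finset.mem_Icc]
    constructor
    · omega
    · omega
  have hcq : c q = ζ := ((mem_Pz n c).mp hqP).2.2
  refine ⟨q, hqP, ?_⟩
  unfold rowZ
  rw [hcq, hfa]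
  omega

lemma key1 (hk : 0 < k) (hr : IsRibbonWord k n w c)
    (hc : ∀ p q, 1 ≤ p → p ≤ q → q ≤ n → c p ≤ c q) {ζ : ℤ} {p q : ℕ}
    (hp : p ∈ Pz n c ζ) (hq : q ∈ Pz n c (ζ + k))
    (hrow : rowZ k n w c p = rowZ k n w c q) : w p ≤ w q := by
  have h1 : (Pz n c ζ).Nonempty := ⟨p, hp⟩
  have h2 : (Pz n c (ζ + k)).Nonempty := ⟨q, hq⟩
  have hAz : Az k n w c ζ = Az k n w c (ζ + k) + dropN k n w c ζ := by
    unfold Az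
    have := cnt_rel (n := n) (w := w) (c := c) hk ζ
    omega
  obtain ⟨a, b, ha1, hab, hbn, hIcc, hfa⟩ := Pz_struct hc h1
  obtain ⟨a', b', ha1', hab', hbn', hIcc', hfa'⟩ := Pz_struct hc h2
  have hpab : a ≤ p ∧ p ≤ b := by rw [hIcc] at hp; exact Finset.mem_Icc.mp hp
  have hqab : a' ≤ q ∧ q ≤ b' := by rw [hIcc'] at hq; exact Finset.mem_Icc.mp hq
  have hcp : c p = ζ := ((mem_Pz n c).mp hp).2.2
  have hcq : c q = ζ + k := ((mem_Pz n c).mp hq).2.2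
  have hrow' : Az k n w c ζ + (p : ℤ) - a = Az k n w c (ζ + k) + q - a' := by
    unfold rowZ at hrow
    rw [hcp, hcq, hfa, hfa'] at hrow
    exact hrow
  have hFv := Fval hr hc h2 hq
  have hFp := Fpm hr hc h1 h2
  rw [hfa'] at hFv hFp
  have hdle := dropN_le (k := k) (n := n) (w := w) (c := c) ζ
  have hFq : Fc n w c ζ q + a = p + 1 := by omega
  by_contra hwle
  push_neg at hwle
  have hsub : (Pz n c ζ).filter (fun q' => w q' ≤ w q) ⊆ (Pz n c ζ).filter (fun q' => q' < p) := by
    intro q' hq'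
    rw [Finset.mem_filter] at hq' ⊢
    exact ⟨hq'.1, pos_lt hr hc hq'.1 hp (by omega)⟩
  have hcard2 : ((Pz n c ζ).filter (fun q' => q' < p)).card + a = p := by
    have hfe : (Pz n c ζ).filter (fun q' => q' < p) = Finset.Icc a (p - 1) := by
      rw [hIcc]
      ext x
      simp only [Finset.mem_filter, Finset.mem_Icc]
      omega
    rw [hfe, Nat.card_Icc]
    omega
  have hle2 := Finset.card_le_card hsub
  unfold Fc at hFq
  omega

lemma key2 (hk : 0 < k) (hr : IsRibbonWord k n w c)
    (hc : ∀ p q, 1 ≤ p → p ≤ q → q ≤ n → c p ≤ c q) {ζ : ℤ} {p q : ℕ}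
    (hp : p ∈ Pz n c (ζ + k)) (hq : q ∈ Pz n c ζ)
    (hcol : colZ k n w c p = colZ k n w c q) : w p < w q := by
  have h1 : (Pz n c ζ).Nonempty := ⟨q, hq⟩
  have h2 : (Pz n c (ζ + k)).Nonempty := ⟨p, hp⟩
  have hAz : Az k n w c ζ = Az k n w c (ζ + k) + dropN k n w c ζ := by
    unfold Az
    have := cnt_rel (n := n) (w := w) (c := c) hk ζ
    omega
  obtain ⟨a, b, ha1, hab, hbn, hIcc, hfa⟩ := Pz_struct hc h1
  obtain ⟨a', b', ha1', hab', hbn', hIcc', hfa'⟩ := Pz_struct hc h2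
  have hpab : a' ≤ p ∧ p ≤ b' := by rw [hIcc'] at hp; exact Finset.mem_Icc.mp hp
  have hqab : a ≤ q ∧ q ≤ b := by rw [hIcc] at hq; exact Finset.mem_Icc.mp hq
  have hcp : c p = ζ + k := ((mem_Pz n c).mp hp).2.2
  have hcq : c q = ζ := ((mem_Pz n c).mp hq).2.2
  have hdiv : (ζ + (k : ℤ)) / k = ζ / k + 1 := by
    have h := Int.add_mul_ediv_right ζ 1 (show (k : ℤ) ≠ 0 by omega)
    simpa using h
  have hcol' : Az k n w c (ζ + k) + (p : ℤ) - a' + 1 = Az k n w c ζ + q - a := by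
    unfold colZ rowZ at hcol
    rw [hcp, hcq, hfa, hfa', hdiv] at hcol
    omega
  have hFv := Fval hr hc h2 hp
  have hFp := Fpm hr hc h1 h2
  rw [hfa'] at hFv hFp
  have hdle := dropN_le (k := k) (n := n) (w := w) (c := c) ζ
  have hFq : Fc n w c ζ p + a = q := by omega
  by_contra hwle
  push_neg at hwle
  have hsub : (Pz n c ζ).filter (fun q' => q' ≤ q) ⊆ (Pz n c ζ).filter (fun q' => w q' ≤ w p) := by
    intro q' hq'
    rw [Finset.mem_filter] at hq' ⊢
    refine ⟨hq'.1, le_trans (wmono_le hr hc hq'.1 hq hq'.2) hwle⟩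
  have hcard2 : ((Pz n c ζ).filter (fun q' => q' ≤ q)).card = q + 1 - a := by
    have hfe : (Pz n c ζ).filter (fun q' => q' ≤ q) = Finset.Icc a q := by
      rw [hIcc]
      ext x
      simp only [Finset.mem_filter, Finset.mem_Icc]
      omega
    rw [hfe, Nat.card_Icc]
  have hle2 := Finset.card_le_card hsub
  unfold Fc at hFq
  omega

lemma ediv_shift (hk : 0 < k) (ζ : ℤ) (t : ℕ) : (ζ + k * t) / (k : ℤ) = ζ / k + t := by
  have h := Int.add_mul_ediv_right ζ (t : ℤ) (show (k : ℤ) ≠ 0 by omega)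
  rw [mul_comm] at h
  exact h

lemma mem_Icc_of_Pz {ζ : ℤ} {p : ℕ} (hp : p ∈ Pz n c ζ) : p ∈ Finset.Icc 1 n := by
  rw [mem_Pz] at hp
  exact Finset.mem_Icc.mpr ⟨hp.1, hp.2.1⟩

lemma mem_Pz_self {p : ℕ} (hp : p ∈ Finset.Icc 1 n) : p ∈ Pz n c (c p) := by
  rw [mem_Pz]
  rw [Finset.mem_Icc] at hp
  exact ⟨hp.1, hp.2, rfl⟩

lemma chainRow (hk : 0 < k) (hr : IsRibbonWord k n w c)
    (hc : ∀ p q, 1 ≤ p → p ≤ q → q ≤ n → c p ≤ c q) (t : ℕ) :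
    ∀ p q : ℕ, p ∈ Finset.Icc 1 n → q ∈ Finset.Icc 1 n → c q = c p + (k : ℤ) * t →
      rowZ k n w c p = rowZ k n w c q → w p ≤ w q := by
  induction t with
  | zero =>
    intro p q hp hq hcq hrow
    have hcq' : c q = c p := by simpa using hcq
    have hpq : p = q := by
      unfold rowZ at hrow
      rw [hcq'] at hrow
      omega
    rw [hpq]
  | succ t ih =>
    intro p q hp hq hcq hrow
    push_cast at hcq
    have hpP : p ∈ Pz n c (c p) := mem_Pz_self hp
    have hqP : q ∈ Pz n c (c q) := mem_Pz_self hq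
    obtain ⟨_, hA, hB⟩ := rowZ_eq (k := k) (w := w) hc hpP
    obtain ⟨_, hA', hB'⟩ := rowZ_eq (k := k) (w := w) hc hqP
    have h1 : Az k n w c (c p + k) ≤ rowZ k n w c p :=
      le_trans (Aup (n := n) (w := w) (c := c) hk (c p)) hA
    have h2 : rowZ k n w c p < Bz k n w c (c p + k) := by
      have hstep := BupT hk hr hc (c p + k) t
      have he : c p + (k : ℤ) + k * t = c q := by push_cast at hcq; linear_combination hcq.symm
      rw [he] at hstep
      calc rowZ k n w c p = rowZ k n w c q := hrow
        _ < Bz k n w c (c q) := hB'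
        _ ≤ _ := hstep
    obtain ⟨q', hq'P, hq'row⟩ := exists_point (w := w) hc h1 h2
    have hq'I : q' ∈ Finset.Icc 1 n := mem_Icc_of_Pz hq'P
    have hcq' : c q' = c p + k := ((mem_Pz n c).mp hq'P).2.2
    have hw1 : w p ≤ w q' := key1 hk hr hc hpP hq'P hq'row.symm
    have hw2 : w q' ≤ w q := by
      apply ih q' q hq'I hq
      · rw [hcq']; push_cast at hcq ⊢; linear_combination hcq
      · rw [hq'row, hrow]
    omega

lemma chainCol (hk : 0 < k) (hr : IsRibbonWord k n w c)
    (hc : ∀ p q, 1 ≤ p → p ≤ q → q ≤ n → c p ≤ c q) (t : ℕ) :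
    ∀ p q : ℕ, p ∈ Finset.Icc 1 n → q ∈ Finset.Icc 1 n → c p = c q + (k : ℤ) * ((t : ℤ) + 1) →
      colZ k n w c p = colZ k n w c q → w p < w q := by
  induction t with
  | zero =>
    intro p q hp hq hcp hcol
    have hqP : q ∈ Pz n c (c q) := mem_Pz_self hq
    have hpP : p ∈ Pz n c (c q + k) := by
      rw [mem_Pz]
      rw [Finset.mem_Icc] at hp
      refine ⟨hp.1, hp.2, by rw [hcp]; push_cast; ring⟩
    exact key2 hk hr hc hpP hqP hcol
  | succ t ih =>
    intro p q hp hq hcp hcol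
    have hpP : p ∈ Pz n c (c p) := mem_Pz_self hp
    have hqP : q ∈ Pz n c (c q) := mem_Pz_self hq
    obtain ⟨_, hA, hB⟩ := rowZ_eq (k := k) (w := w) hc hpP
    obtain ⟨_, hA', hB'⟩ := rowZ_eq (k := k) (w := w) hc hqP
    have hdiv1 : (c q + (k : ℤ)) / k = c q / k + 1 := by
      have h := Int.add_mul_ediv_right (c q) 1 (show (k : ℤ) ≠ 0 by omega)
      simpa using h
    have hcp2 : c p = (c q + k) + (k : ℤ) * ((t : ℤ) + 1) := by
      push_cast at hcp ⊢
      linear_combination hcp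
    have hdiv2 : c p / (k : ℤ) = (c q + k) / k + (t + 1 : ℕ) := by
      rw [show c p = (c q + (k : ℤ)) + k * ((t + 1 : ℕ) : ℤ) by
        push_cast at hcp ⊢
        linear_combination hcp]
      exact ediv_shift hk _ _
    -- find the intermediate cell on diagonal c q + k in the same column
    have hup : Az k n w c (c q + k) + (c q + (k : ℤ)) / k ≤ colZ k n w c p := by
      have hT := AdownT (n := n) (w := w) (c := c) hk (c q + k) (t + 1)
      rw [show c q + (k : ℤ) + k * ((t + 1 : ℕ) : ℤ) = c p by
        push_cast at hcp ⊢
        linear_combination -hcp] at hT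
      have hcolp : colZ k n w c p = rowZ k n w c p + c p / k := rfl
      push_cast at hT hdiv2 ⊢
      omega
    have hdn : colZ k n w c p < Bz k n w c (c q + k) + (c q + (k : ℤ)) / k := by
      have hstep := Bdown hk hr hc (c q)
      have hcolq : colZ k n w c q = rowZ k n w c q + c q / k := rfl
      rw [hcol, hcolq]
      omega
    obtain ⟨q'', hq''P, hq''row⟩ := exists_point (w := w) hc
      (show Az k n w c (c q + k) ≤ colZ k n w c p - (c q + (k : ℤ)) / k by omega)
      (show colZ k n w c p - (c q + (k : ℤ)) / k < Bz k n w c (c q + k) by omega)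
    have hq''I : q'' ∈ Finset.Icc 1 n := mem_Icc_of_Pz hq''P
    have hcq'' : c q'' = c q + k := ((mem_Pz n c).mp hq''P).2.2
    have hq''col : colZ k n w c q'' = colZ k n w c p := by
      have : colZ k n w c q'' = rowZ k n w c q'' + c q'' / k := rfl
      rw [this, hq''row, hcq'', hdiv1]
      have : colZ k n w c p - (c q + (k : ℤ)) / k = colZ k n w c p - (c q / k + 1) := by
        rw [hdiv1]
      omega
    have hw2 : w q'' < w q := key2 hk hr hc hq''P hqP (by rw [hq''col, hcol])
    have hw1 : w p < w q'' := by
      apply ih p q'' hp hq''I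
      · rw [hcq'']; push_cast at hcp ⊢; linear_combination hcp
      · rw [hq''col]
    omega

lemma Az_lb (ζ : ℤ) : (mW n c : ℤ) + k ≤ Az k n w c ζ := by
  unfold Az
  omega

lemma rowZ_nonneg {p : ℕ} (hp : p ∈ Finset.Icc 1 n) : 0 ≤ rowZ k n w c p := by
  have h1 := firstP_le (mem_Pz_self (c := c) hp)
  have h2 := Az_lb (k := k) (n := n) (w := w) (c := c) (c p)
  unfold rowZ
  omega

lemma colZ_nonneg (hk : 0 < k) {p : ℕ} (hp : p ∈ Finset.Icc 1 n) : 0 ≤ colZ k n w c p := by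
  have hb := (Pz_bound n c (mem_Pz_self hp)).1
  have h1 : (-(mW n c : ℤ)) / k ≤ c p / k := Int.ediv_le_ediv (by omega) hb
  have h2 : -(mW n c : ℤ) ≤ (-(mW n c : ℤ)) / k := by
    have h3 : (-(mW n c : ℤ)) * k ≤ (-(mW n c : ℤ)) * 1 := by
      apply mul_le_mul_of_nonpos_left (by omega) (by omega)
    have h4 : -(mW n c : ℤ) = (-(mW n c : ℤ)) * k / k := (Int.mul_ediv_cancel _ (by omega)).symm
    calc -(mW n c : ℤ) = (-(mW n c : ℤ)) * k / k := h4
      _ ≤ ((-(mW n c : ℤ)) * 1) / k := Int.ediv_le_ediv (by omega) h3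
      _ = (-(mW n c : ℤ)) / k := by rw [mul_one]
  have h5 := firstP_le (mem_Pz_self (c := c) hp)
  have h6 := Az_lb (k := k) (n := n) (w := w) (c := c) (c p)
  unfold colZ rowZ
  omega

lemma cellp_fst {p : ℕ} (hp : p ∈ Finset.Icc 1 n) :
    (((cellp k n w c p).1 : ℕ) : ℤ) = rowZ k n w c p :=
  Int.toNat_of_nonneg (rowZ_nonneg hp)

lemma cellp_snd (hk : 0 < k) {p : ℕ} (hp : p ∈ Finset.Icc 1 n) :
    (((cellp k n w c p).2 : ℕ) : ℤ) = colZ k n w c p :=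
  Int.toNat_of_nonneg (colZ_nonneg hk hp)

lemma zeta_cellp (hk : 0 < k) {p : ℕ} (hp : p ∈ Finset.Icc 1 n) {i : ℕ}
    (hmod : (c p) % k = (i : ℤ)) : zeta k i (cellp k n w c p) = c p := by
  unfold zeta
  rw [cellp_fst hp, cellp_snd hk hp]
  have he : colZ k n w c p - rowZ k n w c p = c p / k := by unfold colZ; ring
  rw [he, ← hmod]
  exact Int.mul_ediv_add_emod (c p) k

lemma zeta_ediv (hk : 0 < k) {i : ℕ} (hik : i < k) (x : ℕ × ℕ) :
    zeta k i x / (k : ℤ) = (x.2 : ℤ) - (x.1 : ℤ) ∧ zeta k i x % (k : ℤ) = (i : ℤ) := by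
  unfold zeta
  constructor
  · rw [show (k : ℤ) * ((x.2 : ℤ) - (x.1 : ℤ)) + (i : ℤ)
        = (i : ℤ) + ((x.2 : ℤ) - (x.1 : ℤ)) * k by ring]
    rw [Int.add_mul_ediv_right _ _ (show (k : ℤ) ≠ 0 by omega)]
    rw [Int.ediv_eq_zero_of_lt (by omega) (by omega)]
    ring
  · rw [show (k : ℤ) * ((x.2 : ℤ) - (x.1 : ℤ)) + (i : ℤ)
        = (i : ℤ) + (k : ℤ) * ((x.2 : ℤ) - (x.1 : ℤ)) by ring]
    rw [Int.add_mul_emod_self_left]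
    exact Int.emod_eq_of_lt (by omega) (by omega)

lemma mem_SS (hk : 0 < k) (hc : ∀ p q, 1 ≤ p → p ≤ q → q ≤ n → c p ≤ c q)
    {i : Fin k} {x : ℕ × ℕ} :
    x ∈ SSf k n w c i ↔ (Pz n c (zeta k i x)).Nonempty ∧
      Az k n w c (zeta k i x) ≤ (x.1 : ℤ) ∧ (x.1 : ℤ) < Bz k n w c (zeta k i x) := by
  constructor
  · intro hx
    obtain ⟨p, hpf, rfl⟩ := Finset.mem_image.mp hx
    rw [Finset.mem_filter] at hpf
    obtain ⟨hpI, hmod⟩ := hpf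
    have hz := zeta_cellp (w := w) hk hpI hmod
    rw [hz, cellp_fst hpI]
    have hpP : p ∈ Pz n c (c p) := mem_Pz_self hpI
    obtain ⟨_, h1, h2⟩ := rowZ_eq (k := k) (w := w) hc hpP
    exact ⟨⟨p, hpP⟩, h1, h2⟩
  · rintro ⟨hne, h1, h2⟩
    obtain ⟨q, hqP, hqrow⟩ := exists_point (w := w) hc h1 h2
    have hqI : q ∈ Finset.Icc 1 n := mem_Icc_of_Pz hqP
    have hcq : c q = zeta k i x := ((mem_Pz n c).mp hqP).2.2
    obtain ⟨hdiv, hmod⟩ := zeta_ediv hk i.isLt x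
    have hmodq : c q % k = ((i : ℕ) : ℤ) := by rw [hcq]; exact hmod
    apply Finset.mem_image.mpr
    refine ⟨q, Finset.mem_filter.mpr ⟨hqI, hmodq⟩, ?_⟩
    have hcol : colZ k n w c q = (x.2 : ℤ) := by
      have he : colZ k n w c q = rowZ k n w c q + c q / k := rfl
      rw [he, hqrow, hcq, hdiv]
      ring
    have hrow : rowZ k n w c q = (x.1 : ℤ) := hqrow
    unfold cellp
    have hx1 : ((x.1 : ℕ) : ℤ) = rowZ k n w c q := hrow.symm
    have hx2 : ((x.2 : ℕ) : ℤ) = colZ k n w c q := hcol.symm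
    have : x = (x.1, x.2) := rfl
    rw [this]
    simp only [Prod.mk.injEq]
    omega

lemma SS_row (hk : 0 < k) (hr : IsRibbonWord k n w c)
    (hc : ∀ p q, 1 ≤ p → p ≤ q → q ≤ n → c p ≤ c q) {i : Fin k} {r c1 cc c2 : ℕ}
    (h1 : (r, c1) ∈ SSf k n w c i) (h2 : (r, c2) ∈ SSf k n w c i)
    (hle1 : c1 ≤ cc) (hle2 : cc ≤ c2) : (r, cc) ∈ SSf k n w c i := by
  rw [mem_SS hk hc] at h1 h2 ⊢
  obtain ⟨hne1, hA1, hB1⟩ := h1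
  obtain ⟨hne2, hA2, hB2⟩ := h2
  have e1 : zeta k i (r, cc) = zeta k i (r, c1) + (k : ℤ) * ((cc - c1 : ℕ) : ℤ) := by
    unfold zeta
    have : ((cc - c1 : ℕ) : ℤ) = (cc : ℤ) - c1 := by omega
    rw [this]
    push_cast
    ring
  have e2 : zeta k i (r, c2) = zeta k i (r, cc) + (k : ℤ) * ((c2 - cc : ℕ) : ℤ) := by
    unfold zeta
    have : ((c2 - cc : ℕ) : ℤ) = (c2 : ℤ) - cc := by omega
    rw [this]
    push_cast
    ring
  have hA : Az k n w c (zeta k i (r, cc)) ≤ ((r : ℕ) : ℤ) := by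
    have h := AupT (n := n) (w := w) (c := c) hk (zeta k i (r, c1)) (cc - c1)
    rw [← e1] at h
    exact le_trans h hA1
  have hB : ((r : ℕ) : ℤ) < Bz k n w c (zeta k i (r, cc)) := by
    have h := BupT hk hr hc (zeta k i (r, cc)) (c2 - cc)
    rw [← e2] at h
    exact lt_of_lt_of_le hB2 h
  refine ⟨?_, hA, hB⟩
  have : 0 < (Pz n c (zeta k i (r, cc))).card := by unfold Bz at hB; omega
  exact Finset.card_pos.mp this

lemma SS_col (hk : 0 < k) (hr : IsRibbonWord k n w c)
    (hc : ∀ p q, 1 ≤ p → p ≤ q → q ≤ n → c p ≤ c q) {i : Fin k} {r1 r r2 cc : ℕ}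
    (h1 : (r1, cc) ∈ SSf k n w c i) (h2 : (r2, cc) ∈ SSf k n w c i)
    (hle1 : r1 ≤ r) (hle2 : r ≤ r2) : (r, cc) ∈ SSf k n w c i := by
  rw [mem_SS hk hc] at h1 h2 ⊢
  obtain ⟨hne1, hA1, hB1⟩ := h1
  obtain ⟨hne2, hA2, hB2⟩ := h2
  have e1 : zeta k i (r1, cc) = zeta k i (r, cc) + (k : ℤ) * ((r - r1 : ℕ) : ℤ) := by
    unfold zeta
    have : ((r - r1 : ℕ) : ℤ) = (r : ℤ) - r1 := by omega
    rw [this]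
    push_cast
    ring
  have e2 : zeta k i (r, cc) = zeta k i (r2, cc) + (k : ℤ) * ((r2 - r : ℕ) : ℤ) := by
    unfold zeta
    have : ((r2 - r : ℕ) : ℤ) = (r2 : ℤ) - r := by omega
    rw [this]
    push_cast
    ring
  have hA : Az k n w c (zeta k i (r, cc)) ≤ ((r : ℕ) : ℤ) := by
    have h := AdownT (n := n) (w := w) (c := c) hk (zeta k i (r, cc)) (r - r1)
    rw [← e1] at h
    have : ((r - r1 : ℕ) : ℤ) = (r : ℤ) - r1 := by omega
    omega
  have hB : ((r : ℕ) : ℤ) < Bz k n w c (zeta k i (r, cc)) := by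
    have h := BdownT hk hr hc (zeta k i (r2, cc)) (r2 - r)
    rw [← e2] at h
    have : ((r2 - r : ℕ) : ℤ) = (r2 : ℤ) - r := by omega
    omega
  refine ⟨?_, hA, hB⟩
  have : 0 < (Pz n c (zeta k i (r, cc))).card := by unfold Bz at hB; omega
  exact Finset.card_pos.mp this

lemma SS_corner (hk : 0 < k) (hr : IsRibbonWord k n w c)
    (hc : ∀ p q, 1 ≤ p → p ≤ q → q ≤ n → c p ≤ c q) {i : Fin k} {r1 c1 r2 c2 : ℕ}
    (h1 : (r1, c1) ∈ SSf k n w c i) (h2 : (r2, c2) ∈ SSf k n w c i)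
    (hr12 : r1 ≤ r2) (hc12 : c1 ≤ c2) :
    (r1, c2) ∈ SSf k n w c i ∧ (r2, c1) ∈ SSf k n w c i := by
  rw [mem_SS hk hc] at h1 h2
  obtain ⟨hne1, hA1, hB1⟩ := h1
  obtain ⟨hne2, hA2, hB2⟩ := h2
  have e1 : zeta k i (r1, c2) = zeta k i (r1, c1) + (k : ℤ) * ((c2 - c1 : ℕ) : ℤ) := by
    unfold zeta
    have : ((c2 - c1 : ℕ) : ℤ) = (c2 : ℤ) - c1 := by omega
    rw [this]; push_cast; ring
  have e2 : zeta k i (r1, c2) = zeta k i (r2, c2) + (k : ℤ) * ((r2 - r1 : ℕ) : ℤ) := by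
    unfold zeta
    have : ((r2 - r1 : ℕ) : ℤ) = (r2 : ℤ) - r1 := by omega
    rw [this]; push_cast; ring
  have e3 : zeta k i (r1, c1) = zeta k i (r2, c1) + (k : ℤ) * ((r2 - r1 : ℕ) : ℤ) := by
    unfold zeta
    have : ((r2 - r1 : ℕ) : ℤ) = (r2 : ℤ) - r1 := by omega
    rw [this]; push_cast; ring
  have e4 : zeta k i (r2, c2) = zeta k i (r2, c1) + (k : ℤ) * ((c2 - c1 : ℕ) : ℤ) := by
    unfold zeta
    have : ((c2 - c1 : ℕ) : ℤ) = (c2 : ℤ) - c1 := by omega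
    rw [this]; push_cast; ring
  constructor
  · rw [mem_SS hk hc]
    have hA : Az k n w c (zeta k i (r1, c2)) ≤ ((r1 : ℕ) : ℤ) := by
      have h := AupT (n := n) (w := w) (c := c) hk (zeta k i (r1, c1)) (c2 - c1)
      rw [← e1] at h
      exact le_trans h hA1
    have hB : ((r1 : ℕ) : ℤ) < Bz k n w c (zeta k i (r1, c2)) := by
      have h := BdownT hk hr hc (zeta k i (r2, c2)) (r2 - r1)
      rw [← e2] at h
      have : ((r2 - r1 : ℕ) : ℤ) = (r2 : ℤ) - r1 := by omega
      omega
    refine ⟨?_, hA, hB⟩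
    have : 0 < (Pz n c (zeta k i (r1, c2))).card := by unfold Bz at hB; omega
    exact Finset.card_pos.mp this
  · rw [mem_SS hk hc]
    have hA : Az k n w c (zeta k i (r2, c1)) ≤ ((r2 : ℕ) : ℤ) := by
      have h := AdownT (n := n) (w := w) (c := c) hk (zeta k i (r2, c1)) (r2 - r1)
      rw [← e3] at h
      have : ((r2 - r1 : ℕ) : ℤ) = (r2 : ℤ) - r1 := by omega
      omega
    have hB : ((r2 : ℕ) : ℤ) < Bz k n w c (zeta k i (r2, c1)) := by
      have h := BupT hk hr hc (zeta k i (r2, c1)) (c2 - c1)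
      rw [← e4] at h
      omega
    refine ⟨?_, hA, hB⟩
    have : 0 < (Pz n c (zeta k i (r2, c1))).card := by unfold Bz at hB; omega
    exact Finset.card_pos.mp this

/-- A finite set of cells satisfying row convexity, column convexity and the corner
property is a skew shape. -/
lemma skew_of (S : Finset (ℕ × ℕ))
    (hrow : ∀ r c1 cc c2, (r, c1) ∈ S → (r, c2) ∈ S → c1 ≤ cc → cc ≤ c2 → (r, cc) ∈ S)
    (hcol : ∀ r1 r r2 cc, (r1, cc) ∈ S → (r2, cc) ∈ S → r1 ≤ r → r ≤ r2 → (r, cc) ∈ S)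
    (hcor : ∀ r1 c1 r2 c2, (r1, c1) ∈ S → (r2, c2) ∈ S → r1 ≤ r2 → c1 ≤ c2 →
      (r1, c2) ∈ S ∧ (r2, c1) ∈ S) :
    IsSkewShape S := by
  classical
  set lamCells := S.biUnion (fun x => Finset.range (x.1 + 1) ×ˢ Finset.range (x.2 + 1)) with hl
  have hmem : ∀ y : ℕ × ℕ, y ∈ lamCells ↔ ∃ z ∈ S, y.1 ≤ z.1 ∧ y.2 ≤ z.2 := by
    intro y
    rw [hl, Finset.mem_biUnion]
    constructor
    · rintro ⟨z, hz, hyz⟩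
      rw [Finset.mem_product, Finset.mem_range, Finset.mem_range] at hyz
      exact ⟨z, hz, by omega, by omega⟩
    · rintro ⟨z, hz, h1, h2⟩
      exact ⟨z, hz, by
        rw [Finset.mem_product, Finset.mem_range, Finset.mem_range]
        omega⟩
  have hsub : S ⊆ lamCells := by
    intro x hx
    rw [hmem]
    exact ⟨x, hx, le_refl _, le_refl _⟩
  have hlamLS : IsLowerSet (lamCells : Set (ℕ × ℕ)) := by
    intro a b hba ha
    rw [Finset.mem_coe, hmem] at ha ⊢
    obtain ⟨z, hz, h1, h2⟩ := ha
    exact ⟨z, hz, le_trans hba.1 h1, le_trans hba.2 h2⟩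
  have hnuLS : IsLowerSet ((lamCells \ S : Finset (ℕ × ℕ)) : Set (ℕ × ℕ)) := by
    intro a b hba ha
    rw [Finset.mem_coe, Finset.mem_sdiff] at ha ⊢
    obtain ⟨haL, haS⟩ := ha
    refine ⟨hlamLS hba haL, ?_⟩
    intro hbS
    apply haS
    rw [hmem] at haL
    obtain ⟨z, hzS, h1, h2⟩ := haL
    have hb1 : b.1 ≤ a.1 := hba.1
    have hb2 : b.2 ≤ a.2 := hba.2
    have hbS' : (b.1, b.2) ∈ S := by rwa [Prod.mk.eta]
    have hzS' : (z.1, z.2) ∈ S := by rwa [Prod.mk.eta]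
    obtain ⟨hcA, hcB⟩ := hcor b.1 b.2 z.1 z.2 hbS' hzS' (by omega) (by omega)
    -- (b.1, z.2) ∈ S and (z.1, b.2) ∈ S
    have hx1 : (a.1, b.2) ∈ S := hcol b.1 a.1 z.1 b.2 hbS' hcB (by omega) (by omega)
    have hx2 : (a.1, z.2) ∈ S := hcol b.1 a.1 z.1 z.2 hcA hzS' (by omega) (by omega)
    have hx3 : (b.1, a.2) ∈ S := hrow b.1 b.2 a.2 z.2 hbS' hcA (by omega) (by omega)
    have hx4 := (hcor b.1 a.2 a.1 z.2 hx3 hx2 (by omega) (by omega)).2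
    rwa [Prod.mk.eta] at hx4
  refine ⟨⟨lamCells, hlamLS⟩, ⟨lamCells \ S, hnuLS⟩, ?_, ?_⟩
  · exact Finset.sdiff_subset
  · show S = lamCells \ (lamCells \ S)
    rw [sdiff_sdiff_eq_self hsub]

lemma cellp_inj (hk : 0 < k) {p q : ℕ} (hp : p ∈ Finset.Icc 1 n) (hq : q ∈ Finset.Icc 1 n)
    (hm : c p % k = c q % k) (he : cellp k n w c p = cellp k n w c q) : p = q := by
  have hf : (rowZ k n w c p).toNat = (rowZ k n w c q).toNat := congrArg Prod.fst he
  have hs : (colZ k n w c p).toNat = (colZ k n w c q).toNat := congrArg Prod.snd he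
  have h1 : rowZ k n w c p = rowZ k n w c q := by
    have n1 := rowZ_nonneg (k := k) (w := w) (c := c) hp
    have n2 := rowZ_nonneg (k := k) (w := w) (c := c) hq
    omega
  have h2 : colZ k n w c p = colZ k n w c q := by
    have n1 := colZ_nonneg (w := w) (c := c) hk hp
    have n2 := colZ_nonneg (w := w) (c := c) hk hq
    omega
  have h3 : c p / (k : ℤ) = c q / k := by unfold colZ at h2; omega
  have h4 : c p = c q := by
    have e1 := Int.mul_ediv_add_emod (c p) k
    have e2 := Int.mul_ediv_add_emod (c q) k
    rw [← e1, ← e2, h3, hm]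
  unfold rowZ at h1
  rw [h4] at h1
  omega

lemma TT_eq (hk : 0 < k) {i : Fin k} {x : ℕ × ℕ} {p : ℕ} (hp : p ∈ Finset.Icc 1 n)
    (hmod : (c p) % k = ((i : ℕ) : ℤ)) (hx : cellp k n w c p = x) :
    TT k n w c i x = w p := by
  have hex : ∃ q, q ∈ Finset.Icc 1 n ∧ (c q) % k = ((i : ℕ) : ℤ) ∧ cellp k n w c q = x :=
    ⟨p, hp, hmod, hx⟩
  unfold TT
  rw [dif_pos hex]
  obtain ⟨h1, h2, h3⟩ := hex.choose_spec
  exact congrArg w (cellp_inj hk h1 hp (by rw [h2, hmod]) (by rw [h3, hx]))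

lemma sameRow (hk : 0 < k) (hr : IsRibbonWord k n w c)
    (hc : ∀ p q, 1 ≤ p → p ≤ q → q ≤ n → c p ≤ c q) {p q : ℕ}
    (hp : p ∈ Finset.Icc 1 n) (hq : q ∈ Finset.Icc 1 n) (hm : c p % k = c q % k)
    (hrw : rowZ k n w c p = rowZ k n w c q) (hcle : colZ k n w c p ≤ colZ k n w c q) :
    w p ≤ w q := by
  have hdle : c p / (k : ℤ) ≤ c q / k := by unfold colZ at hcle; omega
  have e1 := Int.mul_ediv_add_emod (c p) k
  have e2 := Int.mul_ediv_add_emod (c q) k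
  have htn : ((c q / (k : ℤ) - c p / k).toNat : ℤ) = c q / (k : ℤ) - c p / k :=
    Int.toNat_of_nonneg (by omega)
  have hce : c q = c p + (k : ℤ) * ((c q / (k : ℤ) - c p / k).toNat : ℤ) := by
    rw [htn]
    linear_combination e1 - e2 - hm
  exact chainRow hk hr hc _ p q hp hq hce hrw

lemma sameCol (hk : 0 < k) (hr : IsRibbonWord k n w c)
    (hc : ∀ p q, 1 ≤ p → p ≤ q → q ≤ n → c p ≤ c q) {p q : ℕ}
    (hp : p ∈ Finset.Icc 1 n) (hq : q ∈ Finset.Icc 1 n) (hm : c p % k = c q % k)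
    (hrlt : rowZ k n w c p < rowZ k n w c q) (hcol : colZ k n w c p = colZ k n w c q) :
    w p < w q := by
  have hdgt : c q / (k : ℤ) < c p / k := by unfold colZ at hcol; omega
  have e1 := Int.mul_ediv_add_emod (c p) k
  have e2 := Int.mul_ediv_add_emod (c q) k
  set t := (c p / (k : ℤ) - c q / k).toNat with ht
  have htn : ((t : ℕ) : ℤ) = c p / (k : ℤ) - c q / k := Int.toNat_of_nonneg (by omega)
  have htpos : 1 ≤ t := by omega
  have hce : c p = c q + (k : ℤ) * (((t - 1 : ℕ) : ℤ) + 1) := by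
    have e3 : (((t - 1 : ℕ) : ℤ) + 1) = (t : ℤ) := by omega
    rw [e3, htn]
    linear_combination e2 - e1 + hm
  exact chainCol hk hr hc (t - 1) p q hp hq hce hcol

lemma ip_val (hk : 0 < k) (p : ℕ) : ((ip k c hk p : ℕ) : ℤ) = c p % k := by
  unfold ip
  simp only
  exact Int.toNat_of_nonneg (Int.emod_nonneg _ (by omega))

lemma shifted_eq (hk : 0 < k) {p : ℕ} (hp : p ∈ Finset.Icc 1 n) :
    shiftedContent k (ip k c hk p, cellp k n w c p) = c p := by
  have h1 : ((ip k c hk p : ℕ) : ℤ) = c p % k := ip_val (c := c) hk p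
  have h2 := cellp_fst (k := k) (w := w) (c := c) hp
  have h3 := cellp_snd (w := w) (c := c) hk hp
  have h4 : colZ k n w c p - rowZ k n w c p = c p / k := by unfold colZ; ring
  have h5 := Int.mul_ediv_add_emod (c p) k
  show (k : ℤ) * ((((cellp k n w c p).2 : ℕ) : ℤ) - (((cellp k n w c p).1 : ℕ) : ℤ))
      + ((ip k c hk p : ℕ) : ℤ) = c p
  rw [h2, h3, h1, h4]
  exact h5

lemma forward (hk : 0 < k) (hw : IsPosWord n w)
    (hc : ∀ p q, 1 ≤ p → p ≤ q → q ≤ n → c p ≤ c q)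
    (hr : IsRibbonWord k n w c) :
    ∃ S : Fin k → Finset (ℕ × ℕ), (∀ i, IsSkewShape (S i)) ∧
      ∃ T : Fin k → ℕ × ℕ → ℕ, SemistdTuple S T ∧
        ∃ e : ℕ → Fin k × ℕ × ℕ, IsCellEnum k n S e ∧
          ∀ p ∈ Set.Icc 1 n, w p = T (e p).1 (e p).2 ∧ c p = shiftedContent k (e p) := by
  refine ⟨fun i => SSf k n w c i, fun i => ?_, TT k n w c, fun i => ?_,
    fun p => (ip k c hk p, cellp k n w c p), ⟨⟨?_, ?_, ?_⟩, ?_⟩, ?_⟩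
  · -- skew shape
    exact skew_of _ (fun r c1 cc c2 h1 h2 hle1 hle2 => SS_row hk hr hc h1 h2 hle1 hle2)
      (fun r1 r r2 cc h1 h2 hle1 hle2 => SS_col hk hr hc h1 h2 hle1 hle2)
      (fun r1 c1 r2 c2 h1 h2 hle1 hle2 => SS_corner hk hr hc h1 h2 hle1 hle2)
  · -- semistandard
    refine ⟨?_, ?_, ?_, ?_⟩
    · intro x hx
      obtain ⟨p, hpf, rfl⟩ := Finset.mem_image.mp hx
      rw [Finset.mem_filter] at hpf
      rw [TT_eq hk hpf.1 hpf.2 rfl]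
      exact hw.1 p (Set.mem_Icc.mpr (Finset.mem_Icc.mp hpf.1))
    · intro x hx
      by_cases hex : ∃ p, p ∈ Finset.Icc 1 n ∧ (c p) % k = ((i : ℕ) : ℤ) ∧ cellp k n w c p = x
      · exfalso
        obtain ⟨p, h1, h2, h3⟩ := hex
        exact hx (Finset.mem_image.mpr ⟨p, Finset.mem_filter.mpr ⟨h1, h2⟩, h3⟩)
      · unfold TT
        rw [dif_neg hex]
    · intro r c1 c2 h1 h2 hle
      obtain ⟨p1, hp1f, he1⟩ := Finset.mem_image.mp h1
      obtain ⟨p2, hp2f, he2⟩ := Finset.mem_image.mp h2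
      rw [Finset.mem_filter] at hp1f hp2f
      rw [TT_eq hk hp1f.1 hp1f.2 he1, TT_eq hk hp2f.1 hp2f.2 he2]
      have hr1 : rowZ k n w c p1 = ((r : ℕ) : ℤ) := by
        have h := cellp_fst (k := k) (w := w) (c := c) hp1f.1
        rw [he1] at h
        exact h.symm
      have hr2 : rowZ k n w c p2 = ((r : ℕ) : ℤ) := by
        have h := cellp_fst (k := k) (w := w) (c := c) hp2f.1
        rw [he2] at h
        exact h.symm
      have hc1 : colZ k n w c p1 = ((c1 : ℕ) : ℤ) := by
        have h := cellp_snd (w := w) (c := c) hk hp1f.1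
        rw [he1] at h
        exact h.symm
      have hc2 : colZ k n w c p2 = ((c2 : ℕ) : ℤ) := by
        have h := cellp_snd (w := w) (c := c) hk hp2f.1
        rw [he2] at h
        exact h.symm
      apply sameRow hk hr hc hp1f.1 hp2f.1 (by rw [hp1f.2, hp2f.2]) (by rw [hr1, hr2])
      rw [hc1, hc2]
      exact_mod_cast hle
    · intro r1 r2 cc h1 h2 hlt
      obtain ⟨p1, hp1f, he1⟩ := Finset.mem_image.mp h1
      obtain ⟨p2, hp2f, he2⟩ := Finset.mem_image.mp h2
      rw [Finset.mem_filter] at hp1f hp2f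
      rw [TT_eq hk hp1f.1 hp1f.2 he1, TT_eq hk hp2f.1 hp2f.2 he2]
      have hr1 : rowZ k n w c p1 = ((r1 : ℕ) : ℤ) := by
        have h := cellp_fst (k := k) (w := w) (c := c) hp1f.1
        rw [he1] at h
        exact h.symm
      have hr2 : rowZ k n w c p2 = ((r2 : ℕ) : ℤ) := by
        have h := cellp_fst (k := k) (w := w) (c := c) hp2f.1
        rw [he2] at h
        exact h.symm
      have hc1 : colZ k n w c p1 = ((cc : ℕ) : ℤ) := by
        have h := cellp_snd (w := w) (c := c) hk hp1f.1
        rw [he1] at h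
        exact h.symm
      have hc2 : colZ k n w c p2 = ((cc : ℕ) : ℤ) := by
        have h := cellp_snd (w := w) (c := c) hk hp2f.1
        rw [he2] at h
        exact h.symm
      apply sameCol hk hr hc hp1f.1 hp2f.1 (by rw [hp1f.2, hp2f.2])
      · rw [hr1, hr2]
        exact_mod_cast hlt
      · rw [hc1, hc2]
  · -- MapsTo
    intro p hp
    have hpI : p ∈ Finset.Icc 1 n := Finset.mem_Icc.mpr (Set.mem_Icc.mp hp)
    show (cellp k n w c p) ∈ SSf k n w c (ip k c hk p)
    exact Finset.mem_image.mpr ⟨p, Finset.mem_filter.mpr ⟨hpI, (ip_val (c := c) hk p).symm⟩, rfl⟩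
  · -- InjOn
    intro p hp q hq he
    have h1 : ip k c hk p = ip k c hk q := congrArg Prod.fst he
    have h2 : cellp k n w c p = cellp k n w c q := congrArg Prod.snd he
    have h3 : ((ip k c hk p : ℕ) : ℤ) = ((ip k c hk q : ℕ) : ℤ) := by rw [h1]
    rw [ip_val (c := c) hk p, ip_val hk q] at h3
    exact cellp_inj hk (Finset.mem_Icc.mpr (Set.mem_Icc.mp hp))
      (Finset.mem_Icc.mpr (Set.mem_Icc.mp hq)) h3 h2
  · -- SurjOn
    rintro ⟨i, x⟩ hix
    have hix' : x ∈ SSf k n w c i := hix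
    obtain ⟨p, hpf, he⟩ := Finset.mem_image.mp hix'
    rw [Finset.mem_filter] at hpf
    refine ⟨p, Set.mem_Icc.mpr (Finset.mem_Icc.mp hpf.1), ?_⟩
    have hival : ip k c hk p = i := by
      apply Fin.ext
      have h1 := ip_val (c := c) hk p
      rw [hpf.2] at h1
      exact_mod_cast h1
    show (ip k c hk p, cellp k n w c p) = (i, x)
    rw [hival, he]
  · -- reading order
    intro p q hp hq hpq
    have hpI : p ∈ Finset.Icc 1 n := Finset.mem_Icc.mpr (Set.mem_Icc.mp hp)
    have hqI : q ∈ Finset.Icc 1 n := Finset.mem_Icc.mpr (Set.mem_Icc.mp hq)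
    have hsp := shifted_eq (n := n) (w := w) (c := c) hk hpI
    have hsq := shifted_eq (n := n) (w := w) (c := c) hk hqI
    show shiftedContent k (ip k c hk p, cellp k n w c p) <
        shiftedContent k (ip k c hk q, cellp k n w c q) ∨ _
    rw [hsp, hsq]
    have hple := (Set.mem_Icc.mp hp)
    have hqle := (Set.mem_Icc.mp hq)
    rcases lt_or_eq_of_le (hc p q hple.1 (le_of_lt hpq) hqle.2) with h | h
    · exact Or.inl h
    · right
      refine ⟨h, ?_⟩
      show (cellp k n w c p).2 < (cellp k n w c q).2
      have hpP : p ∈ Pz n c (c p) := mem_Pz_self hpI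
      have hqP : q ∈ Pz n c (c q) := mem_Pz_self hqI
      have hrowlt : rowZ k n w c p < rowZ k n w c q := by
        unfold rowZ
        rw [← h]
        have h1 := firstP_le hpP
        omega
      have hcollt : colZ k n w c p < colZ k n w c q := by
        unfold colZ
        rw [← h]
        omega
      have s1 := cellp_snd (w := w) (c := c) hk hpI
      have s2 := cellp_snd (w := w) (c := c) hk hqI
      omega
  · -- matching
    intro p hp
    have hpI : p ∈ Finset.Icc 1 n := Finset.mem_Icc.mpr (Set.mem_Icc.mp hp)
    exact ⟨(TT_eq hk hpI (ip_val (c := c) hk p).symm rfl).symm, (shifted_eq (n := n) (w := w) (c := c) hk hpI).symm⟩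

lemma reverse (hk : 0 < k)
    (S : Fin k → Finset (ℕ × ℕ)) (hskew : ∀ i, IsSkewShape (S i))
    (T : Fin k → ℕ × ℕ → ℕ) (hsst : SemistdTuple S T)
    (e : ℕ → Fin k × ℕ × ℕ) (henum : IsCellEnum k n S e)
    (hmatch : ∀ p ∈ Set.Icc 1 n, w p = T (e p).1 (e p).2 ∧ c p = shiftedContent k (e p)) :
    IsRibbonWord k n w c := by
  obtain ⟨hbij, hord⟩ := henum
  intro p h1p hp1n hcp
  have hpI : p ∈ Set.Icc 1 n := Set.mem_Icc.mpr ⟨h1p, by omega⟩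
  have hp1I : p + 1 ∈ Set.Icc 1 n := Set.mem_Icc.mpr ⟨by omega, hp1n⟩
  obtain ⟨hw1, hsc1⟩ := hmatch p hpI
  obtain ⟨hw2, hsc2⟩ := hmatch (p + 1) hp1I
  rcases hep : e p with ⟨i1, r1, c1⟩
  rcases hep1 : e (p + 1) with ⟨i2, r2, c2⟩
  rw [hep] at hw1 hsc1
  rw [hep1] at hw2 hsc2
  have hz1 : c p = (k : ℤ) * ((c1 : ℤ) - (r1 : ℤ)) + ((i1 : ℕ) : ℤ) := hsc1
  have hz2 : c (p + 1) = (k : ℤ) * ((c2 : ℤ) - (r2 : ℤ)) + ((i2 : ℕ) : ℤ) := hsc2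
  have hm1 : c p % k = ((i1 : ℕ) : ℤ) := by
    rw [hz1, show (k : ℤ) * ((c1 : ℤ) - (r1 : ℤ)) + ((i1 : ℕ) : ℤ)
        = ((i1 : ℕ) : ℤ) + (k : ℤ) * ((c1 : ℤ) - (r1 : ℤ)) by ring,
      Int.add_mul_emod_self_left]
    exact Int.emod_eq_of_lt (by omega) (by exact_mod_cast i1.isLt)
  have hm2 : c (p + 1) % k = ((i2 : ℕ) : ℤ) := by
    rw [hz2, show (k : ℤ) * ((c2 : ℤ) - (r2 : ℤ)) + ((i2 : ℕ) : ℤ)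
        = ((i2 : ℕ) : ℤ) + (k : ℤ) * ((c2 : ℤ) - (r2 : ℤ)) by ring,
      Int.add_mul_emod_self_left]
    exact Int.emod_eq_of_lt (by omega) (by exact_mod_cast i2.isLt)
  have hieq : i2 = i1 := by
    apply Fin.ext
    have hii : ((i1 : ℕ) : ℤ) = ((i2 : ℕ) : ℤ) := by rw [← hm1, ← hm2, hcp]
    exact_mod_cast hii.symm
  have hct : (c1 : ℤ) - (r1 : ℤ) = (c2 : ℤ) - (r2 : ℤ) := by
    have h := hz1.symm.trans (hcp.trans hz2)
    rw [hieq] at h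
    have hkne : (k : ℤ) ≠ 0 := by omega
    exact mul_left_cancel₀ hkne (by linarith)
  have hcol12 : c1 < c2 := by
    rcases hord p (p + 1) hpI hp1I (by omega) with h | h
    · rw [hep, hep1, ← hsc1, ← hsc2, hcp] at h
      exact absurd h (lt_irrefl _)
    · rw [hep, hep1] at h
      exact h.2
  have hr12 : r1 < r2 := by omega
  obtain ⟨lam, nu, hle, hdiff⟩ := hskew i1
  have hxS : (r1, c1) ∈ S i1 := by
    have h := hbij.1 hpI
    rw [hep] at h
    exact h
  have hyS : (r2, c2) ∈ S i1 := by
    have h := hbij.1 hp1I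
    rw [hep1] at h
    rw [hieq] at h
    exact h
  have memS : ∀ z : ℕ × ℕ, z ∈ S i1 ↔ z ∈ lam.cells ∧ z ∉ nu.cells := by
    intro z
    rw [hdiff, Finset.mem_sdiff]
  have hxN : (r1, c1) ∉ nu.cells := ((memS _).mp hxS).2
  have hyL : (r2, c2) ∈ lam.cells := ((memS _).mp hyS).1
  have hmemlam : ∀ a b : ℕ, a ≤ r2 → b ≤ c2 → (a, b) ∈ lam.cells := by
    intro a b ha hb
    rw [YoungDiagram.mem_cells] at hyL ⊢
    exact lam.up_left_mem ha hb hyL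
  have hmemnu : ∀ a b : ℕ, r1 ≤ a → c1 ≤ b → (a, b) ∈ nu.cells → False := by
    intro a b ha hb hmem
    apply hxN
    rw [YoungDiagram.mem_cells] at hmem ⊢
    exact nu.up_left_mem ha hb hmem
  have hsurj : ∀ z : ℕ × ℕ, z ∈ S i1 → ∃ p', p' ∈ Set.Icc 1 n ∧ e p' = (i1, z) := by
    intro z hz
    have hmem : ((i1, z) : Fin k × ℕ × ℕ) ∈ {ix : Fin k × ℕ × ℕ | ix.2 ∈ S ix.1} := hz
    obtain ⟨p', hp', he'⟩ := hbij.2.2 hmem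
    exact ⟨p', hp', he'⟩
  have hzS : (r1 + 1, c1 + 1) ∈ S i1 := by
    rw [memS]
    exact ⟨hmemlam _ _ (by omega) (by omega),
      fun hmem => hmemnu (r1 + 1) (c1 + 1) (by omega) (by omega) hmem⟩
  have hr2eq : r2 = r1 + 1 ∧ c2 = c1 + 1 := by
    by_cases hzny : r2 = r1 + 1
    · exact ⟨hzny, by omega⟩
    · exfalso
      obtain ⟨p', hp'I, hep'⟩ := hsurj _ hzS
      obtain ⟨hw', hsc'⟩ := hmatch p' hp'I
      rw [hep'] at hsc'
      have hz' : c p' = (k : ℤ) * (((c1 + 1 : ℕ) : ℤ) - ((r1 + 1 : ℕ) : ℤ)) + ((i1 : ℕ) : ℤ) :=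
        hsc'
      have hcp' : c p' = c p := by rw [hz', hz1]; push_cast; ring
      have hne1 : p' ≠ p := by
        intro hpp
        rw [hpp, hep] at hep'
        have h0 : r1 = r1 + 1 := congrArg (fun t => t.2.1) hep'
        omega
      have hne2 : p' ≠ p + 1 := by
        intro hpp
        rw [hpp, hep1] at hep'
        exact hzny (congrArg (fun t => t.2.1) hep')
      rcases lt_trichotomy p' p with h | h | h
      · have hh := hord p' p hp'I hpI h
        rw [hep', hep] at hh
        rcases hh with h' | h'
        · have hsceq : shiftedContent k ((i1, (r1 + 1, c1 + 1)) : Fin k × ℕ × ℕ)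
              = shiftedContent k ((i1, (r1, c1)) : Fin k × ℕ × ℕ) := by
            rw [← hsc', ← hsc1]
            exact hcp'
          rw [hsceq] at h'
          exact absurd h' (lt_irrefl _)
        · have h2 := h'.2
          simp only at h2
          omega
      · exact hne1 h
      · have hgt : p + 1 < p' := lt_of_le_of_ne (by omega) (Ne.symm hne2)
        have hh := hord (p + 1) p' hp1I hp'I hgt
        rw [hep1, hep'] at hh
        rcases hh with h' | h'
        · have hsceq : shiftedContent k ((i2, (r2, c2)) : Fin k × ℕ × ℕ)
              = shiftedContent k ((i1, (r1 + 1, c1 + 1)) : Fin k × ℕ × ℕ) := by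
            rw [← hsc2, ← hsc']
            exact (hcp'.trans hcp).symm
          rw [hsceq] at h'
          exact absurd h' (lt_irrefl _)
        · have h2 := h'.2
          simp only at h2
          omega
  obtain ⟨hr2e, hc2e⟩ := hr2eq
  subst hr2e
  subst hc2e
  rw [hieq] at hw2
  obtain ⟨_, _, hrowle, hcolt⟩ := hsst i1
  have hzhS : (r1 + 1, c1) ∈ S i1 := by
    rw [memS]
    exact ⟨hmemlam _ _ (by omega) (by omega),
      fun hmem => hmemnu (r1 + 1) c1 (by omega) (by omega) hmem⟩
  have hzjS : (r1, c1 + 1) ∈ S i1 := by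
    rw [memS]
    exact ⟨hmemlam _ _ (by omega) (by omega),
      fun hmem => hmemnu r1 (c1 + 1) (by omega) (by omega) hmem⟩
  obtain ⟨ph, hphI, heph⟩ := hsurj _ hzhS
  obtain ⟨pj, hpjI, hepj⟩ := hsurj _ hzjS
  obtain ⟨hwh, hsch⟩ := hmatch ph hphI
  obtain ⟨hwj, hscj⟩ := hmatch pj hpjI
  rw [heph] at hwh hsch
  rw [hepj] at hwj hscj
  have hch : c ph = c p - k := by
    have hz' : c ph = (k : ℤ) * ((c1 : ℤ) - ((r1 + 1 : ℕ) : ℤ)) + ((i1 : ℕ) : ℤ) := hsch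
    rw [hz', hz1]
    push_cast
    ring
  have hcj : c pj = c p + k := by
    have hz' : c pj = (k : ℤ) * (((c1 + 1 : ℕ) : ℤ) - (r1 : ℤ)) + ((i1 : ℕ) : ℤ) := hscj
    rw [hz', hz1]
    push_cast
    ring
  constructor
  · refine ⟨ph, hphI, hch, ?_, ?_⟩
    · rw [hw1, hwh]
      exact hcolt r1 (r1 + 1) c1 hxS hzhS (by omega)
    · rw [hwh, hw2]
      exact hrowle (r1 + 1) c1 (c1 + 1) hzhS hzS (by omega)
  · refine ⟨pj, hpjI, hcj, ?_, ?_⟩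
    · rw [hw1, hwj]
      exact hrowle r1 c1 (c1 + 1) hxS hzjS (by omega)
    · rw [hwj, hw2]
      exact hcolt r1 (r1 + 1) (c1 + 1) hzjS hzS (by omega)

end

end S15


/-- A pair `(w,c)` is a `k`-ribbon word if and only if there
is a `k`-tuple of semistandard Young tableaux of skew shapes such that `w` is
the content reading word of the `k`-tuple and `c` the corresponding sequence
of shifted contents. -/
theorem statement15 (k n : ℕ) (hk : 0 < k) (w : ℕ → ℕ) (c : ℕ → ℤ)
    (hw : IsPosWord n w)
    (hc : ∀ p q, 1 ≤ p → p ≤ q → q ≤ n → c p ≤ c q) :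
    IsRibbonWord k n w c ↔
      ∃ S : Fin k → Finset (ℕ × ℕ), (∀ i, IsSkewShape (S i)) ∧
        ∃ T : Fin k → ℕ × ℕ → ℕ, SemistdTuple S T ∧
          ∃ e : ℕ → Fin k × ℕ × ℕ, IsCellEnum k n S e ∧
            ∀ p ∈ Set.Icc 1 n, w p = T (e p).1 (e p).2 ∧ c p = shiftedContent k (e p) := by
  
  constructor
  · intro hrib
    exact S15.forward hk hw hc hrib
  · rintro ⟨S, hskew, T, hsst, e, henum, hmatch⟩
    exact S15.reverse hk S hskew T hsst e henum hmatch
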